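/- arXiv:0903.5375 — 5 statements merged into one kernel-verified Lean document; each statement's English description precedes it below -/
import Mathlib

section
/- Generalized Kapranov theorem: Let K be an algebraically closed field equipped with a surjective Krull valuation val : K → Γ ∪ {∞} onto a linearly ordered additive commutative group Γ. For every nonzero Laurent polynomial f in N variables over K, the tropical hypersurface of f equals the hypersurface associated to the tropicalization of f; that is, TV(f) = V(Tf). Explicitly: a point γ ∈ Γ^N satisfies γ = (val(x_1),…,val(x_N)) for some x ∈ (K∖{0})^N with f(x) = 0 if and only if the minimum min_{α ∈ E(f)} (val(φ_α) + α·γ) is attained for at least two distinct exponents α ∈ E(f). -/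
open Finset Pointwise

/-- The tropical dot product `α·γ = ∑ i, α i • γ i`. -/
noncomputable def tropDot {Γ : Type*} [AddCommGroup Γ] [LinearOrder Γ] [IsOrderedAddMonoid Γ] {N : ℕ}
    (α : Fin N → ℤ) (γ : Fin N → Γ) : Γ :=
  ∑ i, α i • γ i

/-- The tropicalization of a Laurent polynomial `f` (an element of the group algebra
`K[ℤ^N]`), evaluated at `γ ∈ Γ^N`:  `Tf(γ) = min_{α ∈ E(f)} (val φ_α + α·γ)`,
computed in `Γ ∪ {∞}` (the min over the empty set is `∞`). -/
noncomputable def tropicalize {Γ : Type*} [AddCommGroup Γ] [LinearOrder Γ] [IsOrderedAddMonoid Γ]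
    {K : Type*} [Field K] {N : ℕ} (val : K → WithTop Γ)
    (f : AddMonoidAlgebra K (Fin N → ℤ)) (γ : Fin N → Γ) : WithTop Γ :=
  f.coeff.support.inf fun α => val (f.coeff α) + WithTop.some (tropDot α γ)

/-- `D_γ(Tf)`: the set of exponents of `f` at which the minimum defining `Tf(γ)`
is attained. -/
def tropD {Γ : Type*} [AddCommGroup Γ] [LinearOrder Γ] [IsOrderedAddMonoid Γ] {K : Type*} [Field K] {N : ℕ}
    (val : K → WithTop Γ) (f : AddMonoidAlgebra K (Fin N → ℤ))
    (γ : Fin N → Γ) : Set (Fin N → ℤ) :=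
  {α | α ∈ f.coeff.support ∧ tropicalize val f γ = val (f.coeff α) + WithTop.some (tropDot α γ)}

/-- `V(Tf)`: the hypersurface associated to the tropicalization of `f`,
i.e. the points `γ` where the minimum is attained at least twice. -/
def tropV {Γ : Type*} [AddCommGroup Γ] [LinearOrder Γ] [IsOrderedAddMonoid Γ] {K : Type*} [Field K] {N : ℕ}
    (val : K → WithTop Γ) (f : AddMonoidAlgebra K (Fin N → ℤ)) :
    Set (Fin N → Γ) :=
  {γ | ∃ α β : Fin N → ℤ, α ≠ β ∧ α ∈ tropD val f γ ∧ β ∈ tropD val f γ}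

/-- Evaluation of a Laurent polynomial at a point of the torus `(K∖{0})^N`:
`f(x) = ∑_{α ∈ E(f)} φ_α x^α`. -/
noncomputable def lEval {K : Type*} [Field K] {N : ℕ}
    (f : AddMonoidAlgebra K (Fin N → ℤ)) (x : Fin N → Kˣ) : K :=
  ∑ α ∈ f.coeff.support, f.coeff α * ((∏ i, (x i) ^ (α i) : Kˣ) : K)




namespace KapranovAux

open Polynomial

variable {Γ : Type*} [AddCommGroup Γ] [LinearOrder Γ] [IsOrderedAddMonoid Γ] {K : Type*} [Field K]
variable {val : K → WithTop Γ}
variable (hval0 : ∀ x : K, val x = ⊤ ↔ x = 0)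
variable (hvalmul : ∀ x y : K, val (x * y) = val x + val y)
variable (hvaladd : ∀ x y : K, min (val x) (val y) ≤ val (x + y))

include hval0 hvalmul

lemma val_one' : val (1 : K) = 0 := by
  have h := hvalmul 1 1
  rw [mul_one] at h
  cases hv : val (1 : K) with
  | top => exact absurd ((hval0 1).1 hv) one_ne_zero
  | coe g =>
    rw [hv, ← WithTop.coe_add, WithTop.coe_eq_coe] at h
    have hg : g = 0 := by
      have := add_left_cancel (a := g) (b := 0) (c := g) (by rw [add_zero, ← h])
      exact this.symm
    simp [hg]

lemma val_neg' (x : K) : val (-x) = val x := by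
  have h1 : val ((-1 : K) * (-1)) = val (-1) + val (-1) := hvalmul _ _
  rw [neg_mul_neg, one_mul, val_one' hval0 hvalmul] at h1
  have hne : val (-1 : K) ≠ ⊤ := by
    intro h; exact absurd ((hval0 _).1 h) (by norm_num)
  cases hv : val (-1 : K) with
  | top => exact absurd hv hne
  | coe g =>
    rw [hv, ← WithTop.coe_add, eq_comm, ← WithTop.coe_zero, WithTop.coe_eq_coe] at h1
    have hg : g = 0 := by
      rcases lt_trichotomy g 0 with h | h | h
      · exact absurd (h1 ▸ add_neg h h) (lt_irrefl (0:Γ))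
      · exact h
      · exact absurd (h1 ▸ add_pos h h) (lt_irrefl (0:Γ))
    have hx : val (-x) = val (-1 : K) + val x := by rw [← hvalmul, neg_one_mul]
    rw [hx, hv, hg, WithTop.coe_zero, zero_add]

omit hvalmul [IsOrderedAddMonoid Γ] in
lemma val_unit_ne_top (x : Kˣ) : val (x : K) ≠ ⊤ := by
  intro h; exact x.ne_zero ((hval0 _).1 h)

include hvaladd

lemma val_add_left {a b : K} (h : val a < val b) : val (a + b) = val a := by
  have hmin := hvaladd a b
  rw [min_eq_left h.le] at hmin
  refine le_antisymm ?_ hmin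
  by_contra hc
  push_neg at hc
  have h2 : val a = val (a + b + -b) := by congr 1; ring
  have h3 := hvaladd (a + b) (-b)
  rw [val_neg' hval0 hvalmul, ← h2] at h3
  exact absurd (lt_of_lt_of_le (lt_min hc h) h3) (lt_irrefl _)

lemma val_add_right {a b : K} (h : val b < val a) : val (a + b) = val b := by
  rw [add_comm]; exact val_add_left hval0 hvalmul hvaladd h

lemma val_sub_left {a b : K} (h : val a < val b) : val (a - b) = val a := by
  rw [sub_eq_add_neg]
  exact val_add_left hval0 hvalmul hvaladd (by rwa [val_neg' hval0 hvalmul])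

lemma val_sub_right {a b : K} (h : val b < val a) : val (a - b) = val b := by
  rw [sub_eq_add_neg, add_comm]
  refine val_add_left hval0 hvalmul hvaladd ?_ |>.trans (val_neg' hval0 hvalmul b)
  rwa [val_neg' hval0 hvalmul]

include hval0 hvalmul in
lemma val_sub_ge (a b : K) : min (val a) (val b) ≤ val (a - b) := by
  rw [sub_eq_add_neg]
  have := hvaladd a (-b)
  rwa [val_neg' hval0 hvalmul] at this


omit hvaladd in
lemma val_multiset_prod (s : Multiset K) :
    val s.prod = (s.map val).sum := by
  induction s using Multiset.induction_on with
  | empty => simpa using val_one' hval0 hvalmul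
  | cons a s ih => simp [hvalmul, ih]

omit hval0 hvalmul in
lemma val_sum_ge {ι : Type*} (s : Finset ι) (F : ι → K) (v : WithTop Γ)
    (h : ∀ i ∈ s, v ≤ val (F i)) (hv : v ≤ val (0 : K)) :
    v ≤ val (∑ i ∈ s, F i) := by
  classical
  induction s using Finset.cons_induction with
  | empty => simpa using hv
  | cons a s ha ih =>
    rw [Finset.sum_cons]
    refine le_trans (le_min (h a (Finset.mem_cons_self a s)) ?_) (hvaladd _ _)
    exact ih fun i hi => h i (Finset.mem_cons_of_mem hi)

lemma val_sum_eq {ι : Type*} (s : Finset ι) (F : ι → K) (i₀ : ι) (hi₀ : i₀ ∈ s)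
    (hne : val (F i₀) ≠ ⊤)
    (h : ∀ i ∈ s, i ≠ i₀ → val (F i₀) < val (F i)) :
    val (∑ i ∈ s, F i) = val (F i₀) := by
  classical
  rw [← Finset.add_sum_erase s F hi₀]
  rcases eq_or_ne (s.erase i₀) ∅ with he | he
  · rw [he]; simp
  · refine val_add_left hval0 hvalmul hvaladd ?_
    have h0 : val (F i₀) < val (0 : K) := by
      rw [(hval0 0).2 rfl]; exact lt_top_iff_ne_top.2 hne
    calc val (F i₀) < (s.erase i₀).inf fun i => val (F i) := by
          rw [Finset.lt_inf_iff (lt_top_iff_ne_top.2 hne)]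
          intro i hi
          exact h i (Finset.mem_of_mem_erase hi) (Finset.ne_of_mem_erase hi)
      _ ≤ val (∑ i ∈ s.erase i₀, F i) := by
          refine val_sum_ge hvaladd _ _ _ (fun i hi => Finset.inf_le hi) ?_
          rw [(hval0 0).2 rfl]; exact le_top

omit hvaladd in
lemma val_unit_pow (x : Kˣ) {g : Γ} (hx : val (x : K) = ↑g) (n : ℕ) :
    val ((x ^ n : Kˣ) : K) = ↑(n • g) := by
  induction n with
  | zero => simpa using val_one' hval0 hvalmul
  | succ n ih =>
    have : ((x ^ (n+1) : Kˣ) : K) = ((x ^ n : Kˣ) : K) * (x : K) := by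
      push_cast [pow_succ]; ring
    rw [this, hvalmul, ih, hx, ← WithTop.coe_add, succ_nsmul]

omit hvaladd in
lemma val_unit_inv (x : Kˣ) {g : Γ} (hx : val (x : K) = ↑g) :
    val ((x⁻¹ : Kˣ) : K) = ↑(-g) := by
  have h : val ((x⁻¹ : Kˣ) : K) + val (x : K) = 0 := by
    rw [← hvalmul]
    norm_cast
    rw [inv_mul_cancel]
    exact val_one' hval0 hvalmul
  cases hv : val ((x⁻¹ : Kˣ) : K) with
  | top => exact absurd ((hval0 _).1 hv) (Units.ne_zero _)
  | coe h' =>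
    rw [hv, hx, ← WithTop.coe_add, ← WithTop.coe_zero, WithTop.coe_eq_coe] at h
    rw [WithTop.coe_eq_coe]
    exact eq_neg_of_add_eq_zero_left h

omit hvaladd in
lemma val_unit_zpow (x : Kˣ) {g : Γ} (hx : val (x : K) = ↑g) (n : ℤ) :
    val ((x ^ n : Kˣ) : K) = ↑(n • g) := by
  cases n with
  | ofNat n => simpa using val_unit_pow hval0 hvalmul x hx n
  | negSucc n =>
    have : (x ^ (Int.negSucc n) : Kˣ) = ((x ^ (n+1) : Kˣ))⁻¹ := by
      rw [zpow_negSucc]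
    rw [this, val_unit_inv hval0 hvalmul _ (val_unit_pow hval0 hvalmul x hx (n+1))]
    congr 1
    rw [Int.negSucc_eq, neg_smul]
    norm_cast


/-- min valuation of the coefficients of a polynomial. -/
noncomputable def minvalP (val : K → WithTop Γ) (p : K[X]) : WithTop Γ :=
  p.support.inf fun k => val (p.coeff k)

omit hvalmul hvaladd in
lemma minvalP_le (p : K[X]) (k : ℕ) : minvalP val p ≤ val (p.coeff k) := by
  by_cases h : k ∈ p.support
  · exact Finset.inf_le h
  · rw [Polynomial.notMem_support_iff.1 h, (hval0 0).2 rfl]; exact le_top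

omit hval0 hvalmul hvaladd in
lemma le_minvalP (p : K[X]) (v : WithTop Γ)
    (h : ∀ k ∈ p.support, v ≤ val (p.coeff k)) : v ≤ minvalP val p :=
  Finset.le_inf h

omit hvalmul hvaladd in
lemma minvalP_attained (p : K[X]) (hp : p ≠ 0) :
    ∃ k ∈ p.support, val (p.coeff k) = minvalP val p ∧ minvalP val p ≠ ⊤ := by
  obtain ⟨k, hk, he⟩ := Finset.exists_mem_eq_inf p.support
    (Polynomial.nonempty_support_iff.2 hp) (fun k => val (p.coeff k))
  refine ⟨k, hk, he.symm, ?_⟩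
  intro h
  rw [minvalP, he] at h
  exact Polynomial.mem_support_iff.1 hk ((hval0 _).1 h)

omit hval0 hvalmul hvaladd in
lemma minvalP_C {c : K} (hc : c ≠ 0) : minvalP val (C c) = val c := by
  rw [minvalP, Polynomial.support_C hc]
  simp

omit hval0 hvalmul hvaladd in
lemma coeff_mul_X_sub_C_zero (p : K[X]) (r : K) :
    (p * (X - C r)).coeff 0 = -(p.coeff 0 * r) := by
  rw [mul_sub, Polynomial.coeff_sub]
  simp [Polynomial.coeff_mul_C]

include hvaladd in
lemma minvalP_mul_X_sub_C {p : K[X]} (hp : p ≠ 0) (r : K) :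
    minvalP val (p * (X - C r)) = minvalP val p + min 0 (val r) := by
  classical
  set m := minvalP val p with hm
  obtain ⟨kw, hkw, hkwe, hmT⟩ := minvalP_attained hval0 p hp
  refine le_antisymm ?_ ?_
  swap
  · refine le_minvalP _ _ (fun k _ => ?_)
    cases k with
    | zero =>
      rw [coeff_mul_X_sub_C_zero, val_neg' hval0 hvalmul, hvalmul]
      exact add_le_add (minvalP_le hval0 p 0) (min_le_right _ _)
    | succ k =>
      rw [Polynomial.coeff_mul_X_sub_C]
      refine le_trans (le_min ?_ ?_) (val_sub_ge hval0 hvalmul hvaladd _ _)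
      · exact le_trans (add_le_add_right (min_le_left _ _) m) (by
          rw [add_zero]; exact minvalP_le hval0 p k)
      · rw [hvalmul]
        exact add_le_add (minvalP_le hval0 p (k+1)) (min_le_right _ _)
  · -- upper bound: exhibit an index
    set T := p.support.filter (fun k => val (p.coeff k) = m) with hT
    have hTne : T.Nonempty := ⟨kw, Finset.mem_filter.2 ⟨hkw, hkwe⟩⟩
    have hTval : ∀ k ∉ T, m < val (p.coeff k) := by
      intro k hk
      rcases eq_or_ne (p.coeff k) 0 with h0 | h0
      · rw [h0, (hval0 0).2 rfl]; exact lt_top_iff_ne_top.2 hmT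
      · refine lt_of_le_of_ne (minvalP_le hval0 p k) fun he => hk ?_
        exact Finset.mem_filter.2 ⟨Polynomial.mem_support_iff.2 h0, he.symm⟩
    rcases lt_or_ge (val r) 0 with hr | hr
    · -- min 0 (val r) = val r ; use smallest attaining index
      rw [min_eq_right hr.le]
      set k₀ := T.min' hTne with hk₀
      have hk₀T : k₀ ∈ T := T.min'_mem hTne
      have hk₀v : val (p.coeff k₀) = m := (Finset.mem_filter.1 hk₀T).2
      have key : val ((p * (X - C r)).coeff k₀) = m + val r := by
        cases hc : k₀ with
        | zero =>
          rw [coeff_mul_X_sub_C_zero, val_neg' hval0 hvalmul, hvalmul, ← hc, hk₀v]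
        | succ k' =>
          rw [Polynomial.coeff_mul_X_sub_C]
          have hk' : k' ∉ T := by
            intro h
            have := T.min'_le k' h
            omega
          have h1 : val (p.coeff (k'+1) * r) = m + val r := by
            rw [hvalmul, ← hc, hk₀v]
          have h2 : val (p.coeff (k'+1) * r) < val (p.coeff k') := by
            rw [h1]
            refine lt_of_lt_of_le ?_ (hTval k' hk').le
            calc m + val r < m + 0 := by
                  refine WithTop.add_lt_add_left hmT hr
              _ = m := add_zero m
          rw [val_sub_right hval0 hvalmul hvaladd h2, h1]
      rw [← key]
      exact minvalP_le hval0 _ k₀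
    · rw [min_eq_left hr, add_zero]
      set k₁ := T.max' hTne with hk₁
      have hk₁T : k₁ ∈ T := T.max'_mem hTne
      have hk₁v : val (p.coeff k₁) = m := (Finset.mem_filter.1 hk₁T).2
      have hk2 : (k₁ + 1) ∉ T := by
        intro h
        have := T.le_max' (k₁+1) h
        omega
      have key : val ((p * (X - C r)).coeff (k₁ + 1)) = m := by
        rw [Polynomial.coeff_mul_X_sub_C]
        have h2 : val (p.coeff k₁) < val (p.coeff (k₁+1) * r) := by
          rw [hvalmul, hk₁v]
          calc m < val (p.coeff (k₁+1)) := hTval _ hk2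
            _ ≤ val (p.coeff (k₁+1)) + val r := le_add_of_nonneg_right hr
        rw [val_sub_left hval0 hvalmul hvaladd h2, hk₁v]
      rw [← key]
      exact minvalP_le hval0 _ (k₁ + 1)

lemma val_eval_eq_minvalP (s : Multiset K) (c : K) (hc : c ≠ 0) (x : K) (hx : val x = 0)
    (hroots : ∀ r ∈ s, val r = 0 → val (x - r) = 0) :
    val ((C c * (s.map fun r => X - C r).prod).eval x)
      = minvalP val (C c * (s.map fun r => X - C r).prod) := by
  induction s using Multiset.induction_on with
  | empty => simp [minvalP_C hc]
  | cons r s ih =>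
    have hps : (C c * ((r ::ₘ s).map fun r => X - C r).prod)
        = (C c * (s.map fun r => X - C r).prod) * (X - C r) := by
      rw [Multiset.map_cons, Multiset.prod_cons]; ring
    have hp'ne : (C c * (s.map fun r => X - C r).prod) ≠ 0 := by
      refine mul_ne_zero (Polynomial.C_ne_zero.2 hc) ?_
      refine Polynomial.Monic.ne_zero (Polynomial.monic_multiset_prod_of_monic _ _ ?_)
      intro a _
      exact Polynomial.monic_X_sub_C a
    have hxr : val (x - r) = min 0 (val r) := by
      rcases lt_trichotomy (val r) 0 with h | h | h
      · rw [min_eq_right h.le]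
        exact val_sub_right hval0 hvalmul hvaladd (by rw [hx]; exact h)
      · rw [h, min_self]
        exact hroots r (Multiset.mem_cons_self r s) h
      · rw [min_eq_left h.le, ← hx]
        exact val_sub_left hval0 hvalmul hvaladd (by rw [hx]; exact h)
    rw [hps, Polynomial.eval_mul, hvalmul, minvalP_mul_X_sub_C hval0 hvalmul hvaladd hp'ne,
      Polynomial.eval_sub, Polynomial.eval_X, Polynomial.eval_C, hxr,
      ih (fun a ha hva => hroots a (Multiset.mem_cons_of_mem ha) hva)]


omit hvaladd in
lemma val_finset_prod {ι : Type*} (s : Finset ι) (F : ι → K) :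
    val (∏ i ∈ s, F i) = ∑ i ∈ s, val (F i) := by
  classical
  induction s using Finset.cons_induction with
  | empty => simpa using val_one' hval0 hvalmul
  | cons a s ha ih => rw [Finset.prod_cons, Finset.sum_cons, hvalmul, ih]

omit hvaladd in
lemma val_unit_prod_zpow_gen {M : ℕ} (u : Fin M → Kˣ) (gs : Fin M → Γ)
    (hu : ∀ j, val ((u j : K)) = ↑(gs j)) (e : Fin M → ℤ) :
    val ((∏ j, (u j) ^ (e j) : Kˣ) : K) = ↑(∑ j, e j • gs j) := by
  have h1 : ((∏ j, (u j) ^ (e j) : Kˣ) : K) = ∏ j, (((u j) ^ (e j) : Kˣ) : K) := by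
    push_cast; rfl
  rw [h1, val_finset_prod hval0 hvalmul]
  have h2 : ∀ j : Fin M, val (((u j) ^ (e j) : Kˣ) : K) = ((e j • gs j : Γ) : WithTop Γ) :=
    fun j => val_unit_zpow hval0 hvalmul (u j) (hu j) (e j)
  rw [Finset.sum_congr rfl (fun j _ => h2 j)]
  exact (WithTop.coe_sum _ _).symm

omit hvaladd in
lemma val_unit_prod_zpow {M : ℕ} (u : Fin M → Kˣ) (hu : ∀ j, val ((u j : K)) = 0)
    (e : Fin M → ℤ) : val ((∏ j, (u j) ^ (e j) : Kˣ) : K) = 0 := by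
  have : ((∏ j, (u j) ^ (e j) : Kˣ) : K) = ∏ j, (((u j) ^ (e j) : Kˣ) : K) := by
    push_cast; rfl
  rw [this, val_finset_prod hval0 hvalmul]
  have : ∀ j : Fin M, val (((u j) ^ (e j) : Kˣ) : K) = ((0 : Γ) : WithTop Γ) := by
    intro j
    rw [val_unit_zpow hval0 hvalmul (u j) (hu j) (e j), smul_zero]
  rw [Finset.sum_congr rfl (fun j _ => this j)]
  simp

section AlgClosed
variable [IsAlgClosed K]

include hval0 hvalmul hvaladd in
lemma exists_residue_avoiding (s : Multiset K) (hs : ∀ r ∈ s, val r = 0) :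
    ∃ y : K, val y = 0 ∧ ∀ r ∈ s, val (y - r) = 0 := by
  classical
  set q : K[X] := X * (s.map fun r => X - C r).prod with hq
  have hqmonic : q.Monic := by
    refine Polynomial.monic_X.mul (Polynomial.monic_multiset_prod_of_monic _ _ ?_)
    intro a _
    exact Polynomial.monic_X_sub_C a
  have hqdeg : 0 < q.degree := by
    rw [Polynomial.degree_eq_natDegree hqmonic.ne_zero]
    have : 1 ≤ q.natDegree := by
      have : q.natDegree = 1 + ((s.map fun r => X - C r).prod).natDegree := by
        rw [hq, Polynomial.natDegree_mul Polynomial.X_ne_zero]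
        · rw [Polynomial.natDegree_X]
        · exact Polynomial.Monic.ne_zero (Polynomial.monic_multiset_prod_of_monic _ _
            (fun a _ => Polynomial.monic_X_sub_C a))
      omega
    exact_mod_cast Nat.lt_of_lt_of_le Nat.zero_lt_one this
  have hdeg : (q - 1).degree ≠ 0 := by
    rw [Polynomial.degree_sub_eq_left_of_degree_lt]
    · exact ne_of_gt hqdeg
    · rw [Polynomial.degree_one]; exact hqdeg
  obtain ⟨y, hy⟩ := IsAlgClosed.exists_root (q - 1) hdeg
  have heval : y * (s.map fun r => y - r).prod = 1 := by
    have := hy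
    rw [Polynomial.IsRoot, Polynomial.eval_sub, Polynomial.eval_one, sub_eq_zero, hq,
      Polynomial.eval_mul, Polynomial.eval_X, Polynomial.eval_multiset_prod,
      Multiset.map_map] at this
    simp only [Function.comp, Polynomial.eval_sub, Polynomial.eval_X, Polynomial.eval_C] at this
    exact this
  have hval : val y + (s.map fun r => val (y - r)).sum = 0 := by
    have h1 : val (y * (s.map fun r => y - r).prod)
        = val y + (s.map fun r => val (y - r)).sum := by
      rw [hvalmul, val_multiset_prod hval0 hvalmul, Multiset.map_map]
      simp [Function.comp]
    rw [← h1, heval]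
    exact val_one' hval0 hvalmul
  have hy0 : val y = 0 := by
    rcases lt_trichotomy (val y) 0 with h | h | h
    · exfalso
      have hsum : (s.map fun r => val (y - r)).sum ≤ 0 := by
        have h1 : ∀ r ∈ s, val (y - r) ≤ (fun _ => (0 : WithTop Γ)) r := by
          intro r hr
          have : val (y - r) = val y := val_sub_left hval0 hvalmul hvaladd
            (by rw [hs r hr]; exact h)
          rw [this]; exact h.le
        calc (s.map fun r => val (y - r)).sum ≤ (s.map fun _ => (0 : WithTop Γ)).sum :=
              Multiset.sum_map_le_sum_map _ _ h1
          _ = 0 := by rw [Multiset.map_const', Multiset.sum_replicate, smul_zero]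
      have : val y + (s.map fun r => val (y - r)).sum ≤ val y := by
        calc val y + (s.map fun r => val (y - r)).sum ≤ val y + 0 := add_le_add_right hsum _
          _ = val y := add_zero _
      rw [hval] at this
      exact absurd (lt_of_le_of_lt this h) (lt_irrefl _)
    · exact h
    · exfalso
      have hsum : (s.map fun r => val (y - r)).sum = 0 := by
        have h1 : (s.map fun r => val (y - r)) = s.map fun _ => (0 : WithTop Γ) := by
          apply Multiset.map_congr rfl
          intro r hr
          rw [val_sub_right hval0 hvalmul hvaladd (by rw [hs r hr]; exact h), hs r hr]
        rw [h1, Multiset.map_const', Multiset.sum_replicate, smul_zero]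
      rw [hsum, add_zero] at hval
      rw [hval] at h
      exact absurd h (lt_irrefl _)
  refine ⟨y, hy0, ?_⟩
  have hsum : (s.map fun r => val (y - r)).sum = 0 := by
    rw [hy0, zero_add] at hval
    exact hval
  intro r hr
  have hge : ∀ r' ∈ s, (0 : WithTop Γ) ≤ val (y - r') := by
    intro r' hr'
    refine le_trans ?_ (val_sub_ge hval0 hvalmul hvaladd y r')
    rw [hy0, hs r' hr', min_self]
  refine le_antisymm ?_ (hge r hr)
  have hsplit : s = r ::ₘ s.erase r := (Multiset.cons_erase hr).symm
  have : (s.map fun r' => val (y - r')).sum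
      = val (y - r) + ((s.erase r).map fun r' => val (y - r')).sum := by
    conv_lhs => rw [hsplit]
    rw [Multiset.map_cons, Multiset.sum_cons]
  rw [this] at hsum
  have hrest : (0 : WithTop Γ) ≤ ((s.erase r).map fun r' => val (y - r')).sum := by
    refine Multiset.sum_nonneg ?_
    intro a ha
    obtain ⟨r', hr', rfl⟩ := Multiset.mem_map.1 ha
    exact hge r' (Multiset.mem_of_mem_erase hr')
  calc val (y - r) ≤ val (y - r) + ((s.erase r).map fun r' => val (y - r')).sum :=
        le_add_of_nonneg_right hrest
    _ = 0 := hsum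

include hval0 hvalmul hvaladd in
lemma exists_common_unit_eval {ι : Type*} (I : Finset ι) (p : ι → K[X])
    (h : ∀ i ∈ I, minvalP val (p i) = 0) :
    ∃ y : Kˣ, val (y : K) = 0 ∧ ∀ i ∈ I, val ((p i).eval (y : K)) = 0 := by
  classical
  set s : Multiset K := (∑ i ∈ I, (p i).roots).filter (fun r => val r = 0) with hs
  obtain ⟨y, hy0, hyavoid⟩ := exists_residue_avoiding hval0 hvalmul hvaladd s
    (fun r hr => (Multiset.mem_filter.1 hr).2)
  have hyne : y ≠ 0 := by
    intro h0
    rw [h0, (hval0 0).2 rfl] at hy0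
    exact (by simp : (⊤ : WithTop Γ) ≠ 0) hy0
  refine ⟨Units.mk0 y hyne, hy0, ?_⟩
  intro i hi
  have hpne : p i ≠ 0 := by
    intro h0
    have : minvalP val (p i) = ⊤ := by
      rw [h0, minvalP, Polynomial.support_zero, Finset.inf_empty]
    have h2 := h i hi
    rw [this] at h2
    exact (by simp : (⊤ : WithTop Γ) ≠ 0) h2
  have heq := (IsAlgClosed.splits (p i)).eq_prod_roots
  have hlc : (p i).leadingCoeff ≠ 0 := Polynomial.leadingCoeff_ne_zero.2 hpne
  have := val_eval_eq_minvalP hval0 hvalmul hvaladd (p i).roots (p i).leadingCoeff hlc y hy0 ?_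
  · rw [Units.val_mk0]
    rw [← heq] at this
    rw [this, h i hi]
  · intro r hr hvr
    refine hyavoid r ?_
    rw [hs]
    refine Multiset.mem_filter.2 ⟨?_, hvr⟩
    rw [Multiset.mem_sum]
    exact ⟨i, hi, hr⟩


include hval0 hvalmul hvaladd in
lemma unique_min_of_no_root (g : Γ) (s : Multiset K) (c : K) (hc : c ≠ 0)
    (hroot : ∀ r ∈ s, val r ≠ (↑g : WithTop Γ)) :
    ∃ k₀ : ℕ,
      (val ((C c * (s.map fun r => X - C r).prod).coeff k₀) + ↑(k₀ • g) ≠ ⊤) ∧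
      ∀ k : ℕ, k ≠ k₀ →
        val ((C c * (s.map fun r => X - C r).prod).coeff k₀) + ↑(k₀ • g)
          < val ((C c * (s.map fun r => X - C r).prod).coeff k) + ↑(k • g) := by
  induction s using Multiset.induction_on with
  | empty =>
    have hcne : val c + (↑((0:ℕ) • g) : WithTop Γ) ≠ ⊤ := by
      rw [zero_smul, WithTop.coe_zero, add_zero]
      exact fun h => hc ((hval0 c).1 h)
    refine ⟨0, ?_, ?_⟩
    · simpa using hcne
    · intro k hk
      simp only [Multiset.map_zero, Multiset.prod_zero, mul_one]
      rw [Polynomial.coeff_C_zero, Polynomial.coeff_C, if_neg hk, (hval0 0).2 rfl, top_add]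
      exact lt_top_iff_ne_top.2 hcne
  | cons r s ih =>
    obtain ⟨k₀, h1, h2⟩ := ih (fun a ha => hroot a (Multiset.mem_cons_of_mem ha))
    set p' : K[X] := C c * (s.map fun r => X - C r).prod with hp'
    have hps : C c * (((r ::ₘ s)).map fun r => X - C r).prod = p' * (X - C r) := by
      rw [Multiset.map_cons, Multiset.prod_cons, hp']; ring
    set m : WithTop Γ := val (p'.coeff k₀) + ↑(k₀ • g) with hmm
    have hmle : ∀ k : ℕ, m ≤ val (p'.coeff k) + ↑(k • g) := by
      intro k
      rcases eq_or_ne k k₀ with rfl | hk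
      · exact le_refl _
      · exact (h2 k hk).le
    have hc0 : ∀ (q : K[X]), val ((q * (X - C r)).coeff 0) + (↑((0:ℕ) • g) : WithTop Γ)
        = val r + (val (q.coeff 0) + ↑((0:ℕ) • g)) := by
      intro q
      rw [coeff_mul_X_sub_C_zero, val_neg' hval0 hvalmul, hvalmul,
        add_comm (val (q.coeff 0)) (val r), add_assoc]
    have hterm2 : ∀ k : ℕ, val (p'.coeff (k+1) * r) + (↑((k+1) • g) : WithTop Γ)
        = val r + (val (p'.coeff (k+1)) + ↑((k+1) • g)) := by
      intro k
      rw [hvalmul, add_comm (val (p'.coeff (k+1))) (val r), add_assoc]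
    have hterm1 : ∀ k : ℕ, val (p'.coeff k) + (↑((k+1) • g) : WithTop Γ)
        = (val (p'.coeff k) + ↑(k • g)) + ↑g := by
      intro k
      rw [succ_nsmul g k, WithTop.coe_add, add_assoc]
    have hgene : (↑g : WithTop Γ) ≠ ⊤ := WithTop.coe_ne_top
    have hcoene : ∀ a : Γ, (↑a : WithTop Γ) ≠ ⊤ := fun a => WithTop.coe_ne_top
    rcases lt_trichotomy (val r) (↑g : WithTop Γ) with hr | hr | hr
    · -- val r < g : minimizer stays k₀, value (val r) + m
      have hrne : val r ≠ ⊤ := (lt_of_lt_of_le hr le_top).ne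
      have hkey : val ((p' * (X - C r)).coeff k₀) + ↑(k₀ • g) = val r + m := by
        by_cases hk0 : k₀ = 0
        · rw [hmm, hk0]
          exact hc0 p'
        · obtain ⟨k', rfl⟩ := Nat.exists_eq_succ_of_ne_zero hk0
          rw [Polynomial.coeff_mul_X_sub_C]
          have hlt2 : val (p'.coeff (k'+1) * r) < val (p'.coeff k') := by
            have hA : val (p'.coeff (k'+1) * r) + (↑((k'+1) • g) : WithTop Γ) = val r + m := by
              rw [hterm2 k', ← hmm]
            have hB : m + ↑g ≤ val (p'.coeff k') + (↑((k'+1) • g) : WithTop Γ) := by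
              rw [hterm1 k']
              exact add_le_add_left (hmle k') _
            have hstep : val (p'.coeff (k'+1) * r) + (↑((k'+1) • g) : WithTop Γ)
                < val (p'.coeff k') + ↑((k'+1) • g) := by
              rw [hA]
              refine lt_of_lt_of_le ?_ hB
              rw [add_comm (val r) m]
              exact WithTop.add_lt_add_left h1 hr
            exact (WithTop.add_lt_add_iff_right (hcoene ((k'+1) • g))).1 hstep
          rw [val_sub_right hval0 hvalmul hvaladd hlt2, hterm2 k', ← hmm]
      refine ⟨k₀, ?_, ?_⟩
      all_goals rw [hps]
      · rw [hkey]
        exact WithTop.add_ne_top.2 ⟨hrne, h1⟩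
      · intro k hk
        rw [hkey]
        by_cases hk0 : k = 0
        · subst hk0
          rw [hc0 p']
          exact WithTop.add_lt_add_left hrne (h2 0 hk)
        · obtain ⟨k', rfl⟩ := Nat.exists_eq_succ_of_ne_zero hk0
          rw [Polynomial.coeff_mul_X_sub_C]
          have hge : min (val (p'.coeff k') + (↑((k'+1) • g) : WithTop Γ))
              (val (p'.coeff (k'+1) * r) + ↑((k'+1) • g))
              ≤ val (p'.coeff k' - p'.coeff (k'+1) * r) + ↑((k'+1) • g) := by
            rw [min_add_add_right]
            exact add_le_add_left (val_sub_ge hval0 hvalmul hvaladd _ _) _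
          refine lt_of_lt_of_le (lt_min ?_ ?_) hge
          · rw [hterm1 k']
            refine lt_of_lt_of_le ?_ (add_le_add_left (hmle k') (↑g : WithTop Γ))
            rw [add_comm (val r) m]
            exact WithTop.add_lt_add_left h1 hr
          · rw [hterm2 k']
            exact WithTop.add_lt_add_left hrne (h2 (k'+1) hk)
    · exact absurd hr (hroot r (Multiset.mem_cons_self r s))
    · -- g < val r : minimizer moves to k₀ + 1, value m + g
      have hchain : ∀ k : ℕ, m + (↑g : WithTop Γ) < val r + (val (p'.coeff k) + ↑(k • g)) := by
        intro k
        calc m + (↑g : WithTop Γ) = ↑g + m := add_comm _ _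
          _ < val r + m := WithTop.add_lt_add_right h1 hr
          _ ≤ val r + (val (p'.coeff k) + ↑(k • g)) := add_le_add_right (hmle k) _
      have hkey : val ((p' * (X - C r)).coeff (k₀+1)) + ↑((k₀+1) • g) = m + ↑g := by
        rw [Polynomial.coeff_mul_X_sub_C]
        have hlt2 : val (p'.coeff k₀) < val (p'.coeff (k₀+1) * r) := by
          have hstep : val (p'.coeff k₀) + (↑((k₀+1) • g) : WithTop Γ)
              < val (p'.coeff (k₀+1) * r) + ↑((k₀+1) • g) := by
            rw [hterm1 k₀, ← hmm, hterm2 k₀]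
            exact hchain (k₀+1)
          exact (WithTop.add_lt_add_iff_right (hcoene ((k₀+1) • g))).1 hstep
        rw [val_sub_left hval0 hvalmul hvaladd hlt2, hterm1 k₀, ← hmm]
      refine ⟨k₀ + 1, ?_, ?_⟩
      all_goals rw [hps]
      · rw [hkey]
        exact WithTop.add_ne_top.2 ⟨h1, hgene⟩
      · intro k hk
        rw [hkey]
        by_cases hk0 : k = 0
        · subst hk0
          rw [hc0 p']
          exact hchain 0
        · obtain ⟨k', rfl⟩ := Nat.exists_eq_succ_of_ne_zero hk0
          have hk' : k' ≠ k₀ := fun h => hk (by rw [h])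
          rw [Polynomial.coeff_mul_X_sub_C]
          have hge : min (val (p'.coeff k') + (↑((k'+1) • g) : WithTop Γ))
              (val (p'.coeff (k'+1) * r) + ↑((k'+1) • g))
              ≤ val (p'.coeff k' - p'.coeff (k'+1) * r) + ↑((k'+1) • g) := by
            rw [min_add_add_right]
            exact add_le_add_left (val_sub_ge hval0 hvalmul hvaladd _ _) _
          refine lt_of_lt_of_le (lt_min ?_ ?_) hge
          · rw [hterm1 k']
            exact WithTop.add_lt_add_right hgene (h2 k' hk')
          · rw [hterm2 k']
            exact hchain (k'+1)

include hval0 hvalmul hvaladd in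
lemma univariate_kapranov (p : K[X]) (hp : p ≠ 0) (g : Γ)
    (k₁ k₂ : ℕ) (hk₁ : k₁ ∈ p.support) (hk₂ : k₂ ∈ p.support) (hne : k₁ ≠ k₂)
    (hmin₁ : ∀ k ∈ p.support, val (p.coeff k₁) + ↑(k₁ • g) ≤ val (p.coeff k) + ↑(k • g))
    (hmin₂ : ∀ k ∈ p.support, val (p.coeff k₂) + ↑(k₂ • g) ≤ val (p.coeff k) + ↑(k • g)) :
    ∃ y : K, val y = ↑g ∧ p.eval y = 0 := by
  by_cases hex : ∃ r ∈ p.roots, val r = (↑g : WithTop Γ)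
  · obtain ⟨r, hr, hvr⟩ := hex
    exact ⟨r, hvr, ((Polynomial.mem_roots').1 hr).2⟩
  · push_neg at hex
    have heq := (IsAlgClosed.splits p).eq_prod_roots
    obtain ⟨k₀, hne0, hlt⟩ := unique_min_of_no_root hval0 hvalmul hvaladd g p.roots
      p.leadingCoeff (Polynomial.leadingCoeff_ne_zero.2 hp) hex
    rw [← heq] at hne0 hlt
    have h₀supp : k₀ ∈ p.support := by
      rw [Polynomial.mem_support_iff]
      intro h0
      rw [h0, (hval0 0).2 rfl, top_add] at hne0
      exact hne0 rfl
    have e1 : k₁ = k₀ := by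
      by_contra hne1
      exact absurd (lt_of_lt_of_le (hlt k₁ hne1) (hmin₁ k₀ h₀supp)) (lt_irrefl _)
    have e2 : k₂ = k₀ := by
      by_contra hne2
      exact absurd (lt_of_lt_of_le (hlt k₂ hne2) (hmin₂ k₀ h₀supp)) (lt_irrefl _)
    exact absurd (e1.trans e2.symm) hne

end AlgClosed

section Generic
variable [IsAlgClosed K]

include hval0 hvalmul hvaladd in
lemma exists_generic_point (M : ℕ) : ∀ {ι : Type*} (I : Finset ι)
    (A : ι → Finset (Fin M → ℤ)) (d : ι → (Fin M → ℤ) → K),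
    (∀ i ∈ I, ∀ α ∈ A i, 0 ≤ val (d i α)) →
    (∀ i ∈ I, ∃ α ∈ A i, val (d i α) = 0) →
    ∃ u : Fin M → Kˣ, (∀ j, val ((u j : K)) = 0) ∧
      ∀ i ∈ I, val (∑ α ∈ A i, d i α * ((∏ j, (u j) ^ (α j) : Kˣ) : K)) = 0 := by
  induction M with
  | zero =>
    intro ι I A d hge hex
    refine ⟨fun j => j.elim0, fun j => j.elim0, ?_⟩
    intro i hi
    obtain ⟨α₀, hα₀, hv₀⟩ := hex i hi
    have hA : A i = {α₀} :=
      Finset.eq_singleton_iff_unique_mem.2 ⟨hα₀, fun b _ => Subsingleton.elim b α₀⟩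
    rw [hA, Finset.sum_singleton]
    simpa using hv₀
  | succ M ih =>
    intro ι I A d hge hex
    classical
    choose! αw hαwmem hαwval using hex
    set lst := Fin.last M with hlst
    set k : ι → ℤ := fun i => αw i lst with hk
    -- data for the induction hypothesis
    set A' : ι → Finset (Fin M → ℤ) :=
      fun i => ((A i).filter (fun α => α lst = k i)).image (fun α => α ∘ Fin.castSucc)
      with hA'
    set d' : ι → (Fin M → ℤ) → K := fun i α' => d i (Fin.snoc α' (k i)) with hd'
    have hsnoc_mem : ∀ i ∈ I, ∀ α' ∈ A' i,
        Fin.snoc α' (k i) ∈ A i ∧ (Fin.snoc α' (k i) : Fin (M+1) → ℤ) lst = k i := by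
      intro i hi α' hα'
      obtain ⟨α, hα, rfl⟩ := Finset.mem_image.1 hα'
      obtain ⟨hαA, hαlst⟩ := Finset.mem_filter.1 hα
      have : (Fin.snoc (α ∘ Fin.castSucc) (k i) : Fin (M+1) → ℤ) = α := by
        rw [← hαlst]
        exact Fin.snoc_init_self α
      rw [this]
      exact ⟨hαA, hαlst⟩
    obtain ⟨u', hu'0, hu'val⟩ := ih I A' d'
      (fun i hi α' hα' => by
        rw [hd']
        exact hge i hi _ (hsnoc_mem i hi α' hα').1)
      (fun i hi => by
        refine ⟨αw i ∘ Fin.castSucc, ?_, ?_⟩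
        · exact Finset.mem_image_of_mem _
            (Finset.mem_filter.2 ⟨hαwmem i hi, rfl⟩)
        · have hsn : (Fin.snoc (αw i ∘ Fin.castSucc) (k i) : Fin (M+1) → ℤ) = αw i :=
            Fin.snoc_init_self (αw i)
          show val (d i (Fin.snoc (αw i ∘ Fin.castSucc) (k i))) = 0
          rw [hsn]
          exact hαwval i hi)
    -- slice sums
    set R : ι → ℤ → K := fun i n =>
      ∑ α ∈ (A i).filter (fun α => α lst = n),
        d i α * ((∏ j : Fin M, (u' j) ^ (α (Fin.castSucc j)) : Kˣ) : K) with hR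
    have hRge : ∀ i ∈ I, ∀ n : ℤ, 0 ≤ val (R i n) := by
      intro i hi n
      refine val_sum_ge hvaladd _ _ _ ?_ (by rw [(hval0 0).2 rfl]; exact le_top)
      intro α hα
      rw [hvalmul, val_unit_prod_zpow hval0 hvalmul u' hu'0, add_zero]
      exact hge i hi α (Finset.mem_filter.1 hα).1
    have hRw : ∀ i ∈ I, val (R i (k i)) = 0 := by
      intro i hi
      have hinj : ∀ x ∈ (A i).filter (fun α => α lst = k i),
          ∀ y ∈ (A i).filter (fun α => α lst = k i),
          x ∘ Fin.castSucc = y ∘ Fin.castSucc → x = y := by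
        intro x hx y hy hxy
        have hxl := (Finset.mem_filter.1 hx).2
        have hyl := (Finset.mem_filter.1 hy).2
        funext j
        induction j using Fin.lastCases with
        | last => rw [hxl, hyl]
        | cast j => exact congrFun hxy j
      have := hu'val i hi
      rw [hA', Finset.sum_image hinj] at this
      rw [hR]
      rw [← this]
      apply congrArg
      apply Finset.sum_congr rfl
      intro α hα
      have hαl := (Finset.mem_filter.1 hα).2
      have hsn : (Fin.snoc (α ∘ Fin.castSucc) (k i) : Fin (M+1) → ℤ) = α := by
        rw [← hαl]; exact Fin.snoc_init_self α
      show d i α * _ = d i (Fin.snoc (α ∘ Fin.castSucc) (k i)) * _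
      rw [hsn]
      rfl
    -- build polynomials for the univariate step
    have hAne : ∀ i ∈ I, ((A i).image (fun α => α lst)).Nonempty :=
      fun i hi => ⟨k i, Finset.mem_image_of_mem _ (hαwmem i hi)⟩
    set e : ι → ℤ := fun i =>
      if h : ((A i).image (fun α => α lst)).Nonempty
      then ((A i).image (fun α => α lst)).min' h else 0 with he
    have hemin : ∀ i ∈ I, ∀ α ∈ A i, e i ≤ α lst := by
      intro i hi α hα
      simp only [he]
      rw [dif_pos (hAne i hi)]
      exact Finset.min'_le _ _ (Finset.mem_image_of_mem _ hα)
    set p : ι → K[X] := fun i =>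
      ∑ α ∈ A i, C (d i α * ((∏ j : Fin M, (u' j) ^ (α (Fin.castSucc j)) : Kˣ) : K))
        * X ^ ((α lst - e i).toNat) with hp
    have hcoeff : ∀ i ∈ I, ∀ t : ℕ, (p i).coeff t = R i (e i + t) := by
      intro i hi t
      rw [hp]
      simp only [Polynomial.finset_sum_coeff, Polynomial.coeff_C_mul, Polynomial.coeff_X_pow,
        mul_ite, mul_one, mul_zero]
      simp only [hR]
      rw [Finset.sum_filter]
      apply Finset.sum_congr rfl
      intro α hα
      have hle := hemin i hi α hα
      have hiff : (t = (α lst - e i).toNat) ↔ (α lst = e i + t) := by omega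
      split_ifs with h1 h2 h3
      · rfl
      · exact absurd (hiff.1 h1) h2
      · exact absurd (hiff.2 h3) h1
      · rfl
    have hminval : ∀ i ∈ I, minvalP val (p i) = 0 := by
      intro i hi
      refine le_antisymm ?_ ?_
      · have h1 : (p i).coeff ((k i - e i).toNat) = R i (k i) := by
          rw [hcoeff i hi]
          congr 1
          have hki : e i ≤ k i := hemin i hi (αw i) (hαwmem i hi)
          omega
        calc minvalP val (p i) ≤ val ((p i).coeff ((k i - e i).toNat)) := minvalP_le hval0 _ _
          _ = 0 := by rw [h1]; exact hRw i hi
      · refine le_minvalP _ _ (fun t _ => ?_)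
        rw [hcoeff i hi]
        exact hRge i hi _
    obtain ⟨y, hy0, hyval⟩ := exists_common_unit_eval hval0 hvalmul hvaladd I p hminval
    refine ⟨(Fin.snoc u' y : Fin (M+1) → Kˣ), ?_, ?_⟩
    · intro j
      induction j using Fin.lastCases with
      | last => rw [Fin.snoc_last]; exact hy0
      | cast j => rw [Fin.snoc_castSucc]; exact hu'0 j
    · intro i hi
      have hkey : (∑ α ∈ A i, d i α *
            ((∏ j : Fin (M+1), (Fin.snoc u' y : Fin (M+1) → Kˣ) j ^ (α j) : Kˣ) : K))
          = ((y ^ (e i) : Kˣ) : K) * (p i).eval (y : K) := by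
        rw [hp, Polynomial.eval_finset_sum, Finset.mul_sum]
        apply Finset.sum_congr rfl
        intro α hα
        rw [Polynomial.eval_mul, Polynomial.eval_C, Polynomial.eval_pow, Polynomial.eval_X]
        have hsplit : (∏ j : Fin (M+1), (Fin.snoc u' y : Fin (M+1) → Kˣ) j ^ (α j) : Kˣ)
            = (∏ j : Fin M, (u' j) ^ (α (Fin.castSucc j)) : Kˣ) * y ^ (α lst) := by
          rw [Fin.prod_univ_castSucc]
          congr 1
          · apply Finset.prod_congr rfl
            intro j _
            rw [Fin.snoc_castSucc]
          · rw [hlst, Fin.snoc_last]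
        have hexp : (y ^ (α lst) : Kˣ) = y ^ (e i) * y ^ (((α lst - e i).toNat : ℕ) : ℤ) := by
          rw [← zpow_add]
          congr 1
          have := hemin i hi α hα
          omega
        rw [hsplit, hexp]
        push_cast
        rw [zpow_natCast]
        ring
      rw [hkey, hvalmul, val_unit_zpow hval0 hvalmul y hy0, hyval i hi, smul_zero]
      simp

end Generic

omit hval0 hvalmul hvaladd in
lemma tropDot_update_zero {N : ℕ} (α : Fin N → ℤ) (γ : Fin N → Γ) (i₀ : Fin N) :
    tropDot (Function.update α i₀ 0) γ = tropDot α γ - α i₀ • γ i₀ := by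
  classical
  have hfun : (fun j => (Function.update α i₀ 0 j) • γ j)
      = Function.update (fun j => α j • γ j) i₀ 0 := by
    funext j
    by_cases h : j = i₀
    · subst h; simp
    · rw [Function.update_of_ne h, Function.update_of_ne h]
  rw [tropDot, hfun, Finset.sum_update_of_mem (Finset.mem_univ i₀), zero_add,
    Finset.sdiff_singleton_eq_erase]
  rw [tropDot, ← Finset.add_sum_erase Finset.univ _ (Finset.mem_univ i₀)]
  rw [add_sub_cancel_left]

end KapranovAux


/-- Generalized Kapranov theorem: over an algebraically closed field with a surjective
Krull valuation, `TV(f) = V(Tf)`. -/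
theorem kapranov_theorem {Γ : Type*} [AddCommGroup Γ] [LinearOrder Γ] [IsOrderedAddMonoid Γ]
    {K : Type*} [Field K] [IsAlgClosed K] {N : ℕ}
    (val : K → WithTop Γ)
    (hval0 : ∀ x : K, val x = ⊤ ↔ x = 0)
    (hvalmul : ∀ x y : K, val (x * y) = val x + val y)
    (hvaladd : ∀ x y : K, min (val x) (val y) ≤ val (x + y))
    (hvalsurj : ∀ g : Γ, ∃ a : K, val a = WithTop.some g)
    (f : AddMonoidAlgebra K (Fin N → ℤ)) (hf : f ≠ 0) (γ : Fin N → Γ) :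
    γ ∈ tropV val f ↔
      ∃ x : Fin N → Kˣ, lEval f x = 0 ∧ ∀ i, val (x i : K) = WithTop.some (γ i) := by
  classical
  have hsupp : f.coeff.support.Nonempty := Finsupp.support_nonempty_iff.2 (mt AddMonoidAlgebra.coeff_eq_zero.1 hf)
  have hterm : ∀ (x : Fin N → Kˣ), (∀ i, val (x i : K) = WithTop.some (γ i)) →
      ∀ δ : Fin N → ℤ, val (f.coeff δ * ((∏ i, (x i) ^ (δ i) : Kˣ) : K))
        = val (f.coeff δ) + WithTop.some (tropDot δ γ) := by
    intro x hx δ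
    rw [hvalmul, KapranovAux.val_unit_prod_zpow_gen hval0 hvalmul x γ hx δ]
    rfl
  constructor
  · rintro ⟨α, β, hαβ, ⟨hαs, hαe⟩, ⟨hβs, hβe⟩⟩
    have hαne : f.coeff α ≠ 0 := Finsupp.mem_support_iff.1 hαs
    have htne : tropicalize val f γ ≠ ⊤ := by
      rw [hαe]
      exact WithTop.add_ne_top.2 ⟨fun h => hαne ((hval0 _).1 h), WithTop.coe_ne_top⟩
    obtain ⟨μ, hμ⟩ := WithTop.ne_top_iff_exists.1 htne
    obtain ⟨i₀, hi₀⟩ := Function.ne_iff.1 hαβ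
    choose sv hsv using hvalsurj
    have hsvne : ∀ c : Γ, sv c ≠ 0 := by
      intro c h
      have h2 := hsv c
      rw [h, (hval0 0).2 rfl] at h2
      exact WithTop.coe_ne_top h2.symm
    set g : Γ := γ i₀ with hg
    set s : Fin N → Kˣ := fun j => Units.mk0 (sv (γ j)) (hsvne _) with hs
    set w : ℤ → Kˣ := fun n => Units.mk0 (sv (μ - n • g)) (hsvne _) with hw
    have hsval : ∀ j, val ((s j : K)) = ↑(γ j) := fun j => hsv (γ j)
    have hwval : ∀ n : ℤ, val ((w n : K)) = ↑(μ - n • g) := fun n => hsv _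
    -- valuation of coefficients at attainers
    have hfin : ∀ δ, δ ∈ f.coeff.support →
        tropicalize val f γ = val (f.coeff δ) + WithTop.some (tropDot δ γ) →
        val (f.coeff δ) = ↑(μ - tropDot δ γ) := by
      intro δ hδ he
      cases hv : val (f.coeff δ) with
      | top => exact absurd ((hval0 _).1 hv) (Finsupp.mem_support_iff.1 hδ)
      | coe c =>
        rw [hv, ← hμ] at he
        rw [show WithTop.some (tropDot δ γ) = ((tropDot δ γ : Γ) : WithTop Γ) from rfl,
          ← WithTop.coe_add, WithTop.coe_eq_coe] at he
        rw [WithTop.coe_eq_coe]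
        exact eq_sub_of_add_eq he.symm
    -- the inf bound
    have hinfle : ∀ δ ∈ f.coeff.support, (↑μ : WithTop Γ)
        ≤ val (f.coeff δ) + WithTop.some (tropDot δ γ) := by
      intro δ hδ
      rw [hμ]
      exact Finset.inf_le hδ
    -- zeroing map
    set z : (Fin N → ℤ) → (Fin N → ℤ) := fun δ => Function.update δ i₀ 0 with hz
    have hzval : ∀ δ : Fin N → ℤ, ∑ j, (z δ) j • γ j = tropDot δ γ - δ i₀ • g := by
      intro δ
      exact KapranovAux.tropDot_update_zero δ γ i₀
    have hzupdate : ∀ (n : ℤ) (δ : Fin N → ℤ), δ i₀ = n → Function.update (z δ) i₀ n = δ := by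
      intro n δ hδn
      funext j
      by_cases hj : j = i₀
      · subst hj
        rw [Function.update_self, hδn]
      · rw [Function.update_of_ne hj]
        show Function.update δ i₀ 0 j = δ j
        rw [Function.update_of_ne hj]
    have hzinj : ∀ (n : ℤ) (δ δ' : Fin N → ℤ), δ i₀ = n → δ' i₀ = n → z δ = z δ' → δ = δ' := by
      intro n δ δ' h1 h2 h3
      rw [← hzupdate n δ h1, ← hzupdate n δ' h2, h3]
    -- attainer slices
    set D : ℤ → Finset (Fin N → ℤ) := fun n => f.coeff.support.filter
      (fun δ => tropicalize val f γ = val (f.coeff δ) + WithTop.some (tropDot δ γ) ∧ δ i₀ = n) with hD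
    set d : ℤ → (Fin N → ℤ) → K := fun n δ' =>
      f.coeff (Function.update δ' i₀ n) * ((∏ j, (s j) ^ (δ' j) : Kˣ) : K) * (((w n)⁻¹ : Kˣ) : K)
      with hd
    have hdval : ∀ (n : ℤ), ∀ δ ∈ D n, val (d n (z δ)) = 0 := by
      intro n δ hδ
      obtain ⟨hδs, hδe, hδn⟩ : δ ∈ f.coeff.support ∧ _ ∧ δ i₀ = n := by
        have h := Finset.mem_filter.1 hδ
        exact ⟨h.1, h.2.1, h.2.2⟩
      show val (f.coeff (Function.update (z δ) i₀ n) * _ * _) = 0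
      rw [hvalmul, hvalmul, hzupdate n δ hδn, hfin δ hδs hδe,
        KapranovAux.val_unit_prod_zpow_gen hval0 hvalmul s γ hsval (z δ),
        KapranovAux.val_unit_inv hval0 hvalmul (w n) (hwval n), hzval δ, hδn]
      rw [← WithTop.coe_add, ← WithTop.coe_add, ← WithTop.coe_zero, WithTop.coe_eq_coe]
      abel
    -- apply the genericity lemma
    obtain ⟨u, hu0, huval⟩ := KapranovAux.exists_generic_point hval0 hvalmul hvaladd N
      ({α i₀, β i₀} : Finset ℤ) (fun n => (D n).image z) d
      (by
        intro n _ δ' hδ'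
        obtain ⟨δ, hδ, rfl⟩ := Finset.mem_image.1 hδ'
        rw [hdval n δ hδ])
      (by
        intro n hn
        rcases Finset.mem_insert.1 hn with rfl | hn
        · exact ⟨z α, Finset.mem_image_of_mem _
            (Finset.mem_filter.2 ⟨hαs, hαe, rfl⟩), hdval _ α
            (Finset.mem_filter.2 ⟨hαs, hαe, rfl⟩)⟩
        · rcases Finset.mem_singleton.1 hn with rfl
          exact ⟨z β, Finset.mem_image_of_mem _
            (Finset.mem_filter.2 ⟨hβs, hβe, rfl⟩), hdval _ β
            (Finset.mem_filter.2 ⟨hβs, hβe, rfl⟩)⟩)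
    -- combined units and their valuation
    set su : Fin N → Kˣ := fun j => s j * u j with hsu
    have hsuval : ∀ j, val ((su j : K)) = ↑(γ j) := by
      intro j
      show val ((s j : K) * (u j : K)) = _
      rw [hvalmul, hsval j, hu0 j, add_zero]
    -- minimal exponent in direction i₀
    have hEne : (f.coeff.support.image (fun δ => δ i₀)).Nonempty :=
      ⟨α i₀, Finset.mem_image_of_mem _ hαs⟩
    obtain ⟨e, hele⟩ : ∃ e : ℤ, ∀ δ ∈ f.coeff.support, e ≤ δ i₀ :=
      ⟨(f.coeff.support.image (fun δ => δ i₀)).min' hEne,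
        fun δ hδ => Finset.min'_le _ _ (Finset.mem_image_of_mem _ hδ)⟩
    -- the auxiliary univariate polynomial
    set P : Polynomial K := ∑ δ ∈ f.coeff.support,
      Polynomial.C (f.coeff δ * ((∏ j, (su j) ^ (z δ j) : Kˣ) : K))
        * Polynomial.X ^ ((δ i₀ - e).toNat) with hP
    have hcoeffP : ∀ t : ℕ, P.coeff t = ∑ δ ∈ f.coeff.support.filter (fun δ => δ i₀ = e + t),
        f.coeff δ * ((∏ j, (su j) ^ (z δ j) : Kˣ) : K) := by
      intro t
      simp only [hP, Polynomial.finset_sum_coeff, Polynomial.coeff_C_mul,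
        Polynomial.coeff_X_pow, mul_ite, mul_one, mul_zero]
      rw [Finset.sum_filter]
      apply Finset.sum_congr rfl
      intro δ hδ
      have hle := hele δ hδ
      have hiff : (t = (δ i₀ - e).toNat) ↔ (δ i₀ = e + t) := by omega
      split_ifs with h1 h2 h3
      · rfl
      · exact absurd (hiff.1 h1) h2
      · exact absurd (hiff.2 h3) h1
      · rfl
    have htermv : ∀ δ ∈ f.coeff.support, val (f.coeff δ * ((∏ j, (su j) ^ (z δ j) : Kˣ) : K))
        = val (f.coeff δ) + ↑(tropDot δ γ - δ i₀ • g) := by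
      intro δ hδ
      rw [hvalmul, KapranovAux.val_unit_prod_zpow_gen hval0 hvalmul su γ hsuval (z δ), hzval δ]
    have hcoesplit : ∀ (c : Γ) (δ : Fin N → ℤ),
        (val (f.coeff δ) + WithTop.some (tropDot δ γ)) + (↑(-c) : WithTop Γ)
          = val (f.coeff δ) + ↑(tropDot δ γ - c) := by
      intro c δ
      rw [add_assoc]
      congr 1
      rw [show WithTop.some (tropDot δ γ) = ((tropDot δ γ : Γ) : WithTop Γ) from rfl,
        ← WithTop.coe_add, WithTop.coe_eq_coe]
      rw [sub_eq_add_neg]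
    have hB1 : ∀ t : ℕ, (↑(μ - e • g - (t : ℤ) • g) : WithTop Γ) ≤ val (P.coeff t) := by
      intro t
      rw [hcoeffP t]
      refine KapranovAux.val_sum_ge hvaladd _ _ _ ?_ (by rw [(hval0 0).2 rfl]; exact le_top)
      intro δ hδ
      obtain ⟨hδs, hδn⟩ := Finset.mem_filter.1 hδ
      rw [htermv δ hδs]
      calc (↑(μ - e • g - (t : ℤ) • g) : WithTop Γ)
          = ↑μ + ↑(-((e + (t : ℤ)) • g)) := by
            rw [← WithTop.coe_add]
            congr 1
            rw [add_smul]
            abel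
        _ ≤ (val (f.coeff δ) + WithTop.some (tropDot δ γ)) + ↑(-((e + (t : ℤ)) • g)) :=
            add_le_add_left (hinfle δ hδs) _
        _ = val (f.coeff δ) + ↑(tropDot δ γ - δ i₀ • g) := by
            rw [hcoesplit, hδn]
    have hB2 : ∀ n ∈ ({α i₀, β i₀} : Finset ℤ),
        val (P.coeff ((n - e).toNat)) = ↑(μ - n • g) := by
      intro n hn
      have hen : e ≤ n := by
        rcases Finset.mem_insert.1 hn with rfl | hn'
        · exact hele α hαs
        · rcases Finset.mem_singleton.1 hn' with rfl
          exact hele β hβs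
      have hent : e + (((n - e).toNat : ℕ) : ℤ) = n := by omega
      rw [hcoeffP, hent]
      rw [← Finset.sum_filter_add_sum_filter_not (f.coeff.support.filter (fun δ => δ i₀ = n))
        (fun δ => tropicalize val f γ = val (f.coeff δ) + WithTop.some (tropDot δ γ))]
      have hFq : (f.coeff.support.filter (fun δ => δ i₀ = n)).filter
          (fun δ => tropicalize val f γ = val (f.coeff δ) + WithTop.some (tropDot δ γ)) = D n := by
        ext δ
        simp only [hD, Finset.mem_filter]
        tauto
      have hS1 : val (∑ δ ∈ (f.coeff.support.filter (fun δ => δ i₀ = n)).filter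
            (fun δ => tropicalize val f γ = val (f.coeff δ) + WithTop.some (tropDot δ γ)),
            f.coeff δ * ((∏ j, (su j) ^ (z δ j) : Kˣ) : K)) = ↑(μ - n • g) := by
        have hsum : ∑ δ ∈ (f.coeff.support.filter (fun δ => δ i₀ = n)).filter
              (fun δ => tropicalize val f γ = val (f.coeff δ) + WithTop.some (tropDot δ γ)),
              f.coeff δ * ((∏ j, (su j) ^ (z δ j) : Kˣ) : K)
            = (w n : K) * ∑ δ' ∈ (D n).image z, d n δ' * ((∏ j, (u j) ^ (δ' j) : Kˣ) : K) := by
          rw [hFq, Finset.mul_sum, Finset.sum_image (fun δ₁ h₁ δ₂ h₂ h12 =>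
            hzinj n δ₁ δ₂ (Finset.mem_filter.1 h₁).2.2 (Finset.mem_filter.1 h₂).2.2 h12)]
          apply Finset.sum_congr rfl
          intro δ hδ
          have hδn : δ i₀ = n := (Finset.mem_filter.1 hδ).2.2
          show f.coeff δ * ((∏ j, (su j) ^ (z δ j) : Kˣ) : K) = (w n : K) *
            ((f.coeff (Function.update (z δ) i₀ n) * ((∏ j, (s j) ^ (z δ j) : Kˣ) : K)
              * (((w n)⁻¹ : Kˣ) : K)) * ((∏ j, (u j) ^ (z δ j) : Kˣ) : K))
          rw [hzupdate n δ hδn]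
          have hprod : (∏ j, (su j) ^ (z δ j) : Kˣ)
              = (∏ j, (s j) ^ (z δ j) : Kˣ) * (∏ j, (u j) ^ (z δ j) : Kˣ) := by
            rw [← Finset.prod_mul_distrib]
            apply Finset.prod_congr rfl
            intro j _
            exact mul_zpow (s j) (u j) (z δ j)
          rw [hprod]
          have hwne : ((w n : Kˣ) : K) ≠ 0 := Units.ne_zero _
          push_cast
          field_simp
        rw [hsum, hvalmul, hwval n, huval n hn, add_zero]
      have hS2 : (↑(μ - n • g) : WithTop Γ) < val (∑ δ ∈ (f.coeff.support.filter
            (fun δ => δ i₀ = n)).filter (fun δ =>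
            ¬ (tropicalize val f γ = val (f.coeff δ) + WithTop.some (tropDot δ γ))),
            f.coeff δ * ((∏ j, (su j) ^ (z δ j) : Kˣ) : K)) := by
        set F2 := (f.coeff.support.filter (fun δ => δ i₀ = n)).filter (fun δ =>
            ¬ (tropicalize val f γ = val (f.coeff δ) + WithTop.some (tropDot δ γ))) with hF2
        have hterm2 : ∀ δ ∈ F2, (↑(μ - n • g) : WithTop Γ)
            < val (f.coeff δ * ((∏ j, (su j) ^ (z δ j) : Kˣ) : K)) := by
          intro δ hδ
          obtain ⟨hδF, hδnq⟩ := Finset.mem_filter.1 hδ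
          obtain ⟨hδs, hδn⟩ := Finset.mem_filter.1 hδF
          rw [htermv δ hδs]
          have hstrict : (↑μ : WithTop Γ) < val (f.coeff δ) + WithTop.some (tropDot δ γ) :=
            lt_of_le_of_ne (hinfle δ hδs) (fun hc => hδnq (hμ ▸ hc))
          calc (↑(μ - n • g) : WithTop Γ) = ↑μ + ↑(-(n • g)) := by
                rw [← WithTop.coe_add, sub_eq_add_neg]
            _ < (val (f.coeff δ) + WithTop.some (tropDot δ γ)) + ↑(-(n • g)) :=
                WithTop.add_lt_add_right WithTop.coe_ne_top hstrict
            _ = val (f.coeff δ) + ↑(tropDot δ γ - δ i₀ • g) := by rw [hcoesplit, hδn]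
        refine lt_of_lt_of_le ?_ (KapranovAux.val_sum_ge hvaladd F2 _
          (F2.inf (fun δ => val (f.coeff δ * ((∏ j, (su j) ^ (z δ j) : Kˣ) : K))))
          (fun δ hδ => Finset.inf_le hδ)
          (by rw [(hval0 0).2 rfl]; exact le_top))
        rw [Finset.lt_inf_iff (lt_top_iff_ne_top.2 WithTop.coe_ne_top)]
        exact hterm2
      rw [KapranovAux.val_add_left hval0 hvalmul hvaladd (by rw [hS1]; exact hS2), hS1]
    -- apply univariate Kapranov
    have hmema : α i₀ ∈ ({α i₀, β i₀} : Finset ℤ) := Finset.mem_insert_self _ _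
    have hmemb : β i₀ ∈ ({α i₀, β i₀} : Finset ℤ) :=
      Finset.mem_insert_of_mem (Finset.mem_singleton_self _)
    have hka := hB2 (α i₀) hmema
    have hkb := hB2 (β i₀) hmemb
    have hkane : P.coeff ((α i₀ - e).toNat) ≠ 0 := by
      intro h0
      rw [h0, (hval0 0).2 rfl] at hka
      exact WithTop.coe_ne_top hka.symm
    have hkbne : P.coeff ((β i₀ - e).toNat) ≠ 0 := by
      intro h0
      rw [h0, (hval0 0).2 rfl] at hkb
      exact WithTop.coe_ne_top hkb.symm
    have hPne : P ≠ 0 := fun h0 => hkane (by rw [h0, Polynomial.coeff_zero])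
    have hkanekb : ((α i₀ - e).toNat) ≠ ((β i₀ - e).toNat) := by
      have h1 := hele α hαs
      have h2 := hele β hβs
      omega
    have hL : ∀ n ∈ ({α i₀, β i₀} : Finset ℤ),
        (↑(μ - n • g) : WithTop Γ) + ↑(((n - e).toNat : ℕ) • g) = ↑(μ - e • g) := by
      intro n hn
      have hen : e ≤ n := by
        rcases Finset.mem_insert.1 hn with rfl | hn'
        · exact hele α hαs
        · rcases Finset.mem_singleton.1 hn' with rfl
          exact hele β hβs
      rw [← WithTop.coe_add, WithTop.coe_eq_coe]
      have h3 : (((n - e).toNat : ℕ) • g) = ((n - e) : ℤ) • g := by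
        rw [← natCast_zsmul]
        congr 1
        omega
      rw [h3, sub_smul]
      abel
    have hR : ∀ k : ℕ, (↑(μ - e • g) : WithTop Γ) ≤ val (P.coeff k) + ↑((k : ℕ) • g) := by
      intro k
      calc (↑(μ - e • g) : WithTop Γ) = ↑(μ - e • g - (k : ℤ) • g) + ↑((k : ℕ) • g) := by
            rw [← WithTop.coe_add, WithTop.coe_eq_coe, ← natCast_zsmul]
            abel
        _ ≤ val (P.coeff k) + ↑((k : ℕ) • g) := add_le_add_left (hB1 k) _
    obtain ⟨y, hyv, hyr⟩ := KapranovAux.univariate_kapranov hval0 hvalmul hvaladd P hPne g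
      ((α i₀ - e).toNat) ((β i₀ - e).toNat)
      (Polynomial.mem_support_iff.2 hkane) (Polynomial.mem_support_iff.2 hkbne) hkanekb
      (fun k _ => by rw [hka, hL (α i₀) hmema]; exact hR k)
      (fun k _ => by rw [hkb, hL (β i₀) hmemb]; exact hR k)
    have hy0 : y ≠ 0 := by
      intro h0
      rw [h0, (hval0 0).2 rfl] at hyv
      exact WithTop.coe_ne_top hyv.symm
    set yu : Kˣ := Units.mk0 y hy0 with hyu
    -- products with updated coordinate
    have hxprod : ∀ δ : Fin N → ℤ,
        (∏ j, (Function.update su i₀ yu j) ^ (δ j) : Kˣ)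
          = yu ^ (δ i₀) * (∏ j, (su j) ^ (z δ j) : Kˣ) := by
      intro δ
      have h1 : (∏ j, (su j) ^ (z δ j) : Kˣ)
          = ∏ j ∈ Finset.univ.erase i₀, (su j) ^ (δ j) := by
        rw [← Finset.mul_prod_erase Finset.univ _ (Finset.mem_univ i₀)]
        have hz0 : (z δ) i₀ = 0 := Function.update_self _ _ _
        rw [hz0, zpow_zero, one_mul]
        apply Finset.prod_congr rfl
        intro j hj
        congr 1
        show Function.update δ i₀ 0 j = δ j
        rw [Function.update_of_ne (Finset.ne_of_mem_erase hj)]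
      have h2 : (∏ j, (Function.update su i₀ yu j) ^ (δ j) : Kˣ)
          = yu ^ (δ i₀) * ∏ j ∈ Finset.univ.erase i₀, (su j) ^ (δ j) := by
        rw [← Finset.mul_prod_erase Finset.univ _ (Finset.mem_univ i₀), Function.update_self]
        congr 1
        apply Finset.prod_congr rfl
        intro j hj
        rw [Function.update_of_ne (Finset.ne_of_mem_erase hj)]
      rw [h1, h2]
    have hEval : lEval f (Function.update su i₀ yu) = ((yu ^ e : Kˣ) : K) * P.eval y := by
      show (∑ δ ∈ f.coeff.support, f.coeff δ * ((∏ j, (Function.update su i₀ yu j) ^ (δ j) : Kˣ) : K)) = _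
      rw [hP, Polynomial.eval_finset_sum, Finset.mul_sum]
      apply Finset.sum_congr rfl
      intro δ hδ
      rw [Polynomial.eval_mul, Polynomial.eval_C, Polynomial.eval_pow, Polynomial.eval_X,
        hxprod δ]
      have hexp : (yu ^ (δ i₀) : Kˣ) = yu ^ e * yu ^ ((((δ i₀ - e).toNat : ℕ)) : ℤ) := by
        rw [← zpow_add]
        congr 1
        have := hele δ hδ
        omega
      rw [hexp]
      push_cast
      rw [zpow_natCast]
      simp only [hyu, Units.val_mk0]
      ring
    refine ⟨Function.update su i₀ yu, ?_, ?_⟩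
    · rw [hEval, hyr, mul_zero]
    · intro i
      by_cases hi : i = i₀
      · subst hi
        rw [Function.update_self]
        exact hyv
      · rw [Function.update_of_ne hi]
        exact hsuval i
  · rintro ⟨x, hx0, hxv⟩
    by_contra hno
    obtain ⟨α₀, hα₀s, hα₀e⟩ := Finset.exists_mem_eq_inf f.coeff.support hsupp
      (fun δ => val (f.coeff δ) + WithTop.some (tropDot δ γ))
    have hα₀D : α₀ ∈ tropD val f γ := ⟨hα₀s, hα₀e⟩
    have hstrict : ∀ δ ∈ f.coeff.support, δ ≠ α₀ →
        val (f.coeff α₀ * ((∏ i, (x i) ^ (α₀ i) : Kˣ) : K))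
          < val (f.coeff δ * ((∏ i, (x i) ^ (δ i) : Kˣ) : K)) := by
      intro δ hδ hne
      rw [hterm x hxv δ, hterm x hxv α₀]
      refine lt_of_le_of_ne ?_ ?_
      · rw [show val (f.coeff α₀) + WithTop.some (tropDot α₀ γ) = tropicalize val f γ from hα₀e.symm]
        exact Finset.inf_le hδ
      · intro he
        exact hno ⟨α₀, δ, Ne.symm hne, hα₀D, ⟨hδ, hα₀e.trans he⟩⟩
    have hne_top : val (f.coeff α₀ * ((∏ i, (x i) ^ (α₀ i) : Kˣ) : K)) ≠ ⊤ := by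
      rw [hterm x hxv α₀]
      exact WithTop.add_ne_top.2
        ⟨fun h => Finsupp.mem_support_iff.1 hα₀s ((hval0 _).1 h), WithTop.coe_ne_top⟩
    have hkey := KapranovAux.val_sum_eq hval0 hvalmul hvaladd f.coeff.support
      (fun δ => f.coeff δ * ((∏ i, (x i) ^ (δ i) : Kˣ) : K)) α₀ hα₀s hne_top hstrict
    have h0 : (∑ δ ∈ f.coeff.support, f.coeff δ * ((∏ i, (x i) ^ (δ i) : Kˣ) : K)) = 0 := hx0
    rw [h0, (hval0 0).2 rfl] at hkey
    exact hne_top hkey.symm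
end

section
/- Let f be a nonzero Laurent polynomial in N variables over K. If φ ∈ (K∖{0})^N is a zero of f, then the point (val(φ_1),…,val(φ_N)) lies in the hypersurface associated to the tropicalization of f. That is, TV(f) ⊆ V(Tf). -/
open Finset Pointwise
section
variable {Γ : Type*} [AddCommGroup Γ] [LinearOrder Γ] [IsOrderedAddMonoid Γ] {K : Type*} [Field K]
    (val : K → WithTop Γ)
    (hval0 : ∀ x : K, val x = ⊤ ↔ x = 0)
    (hvalmul : ∀ x y : K, val (x * y) = val x + val y)
    (hvaladd : ∀ x y : K, min (val x) (val y) ≤ val (x + y))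

include hval0 hvalmul in
lemma val_one' : val 1 = 0 := by
  have h := hvalmul 1 1
  rw [mul_one] at h
  have hne : val 1 ≠ ⊤ := by simp [hval0]
  obtain ⟨g, hg⟩ := WithTop.ne_top_iff_exists.mp hne
  rw [← hg] at h ⊢
  rw [← WithTop.coe_add, WithTop.coe_eq_coe] at h
  norm_cast
  exact right_eq_add.mp h

include hval0 hvalmul in
lemma val_zpow' (u : Kˣ) (c : Γ) (h : val (u : K) = WithTop.some c) (n : ℤ) :
    val ((u ^ n : Kˣ) : K) = WithTop.some (n • c) := by
  have hnat : ∀ m : ℕ, val ((u ^ m : Kˣ) : K) = WithTop.some (m • c) := by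
    intro m
    induction m with
    | zero => simpa using val_one' val hval0 hvalmul
    | succ k ih =>
      have : ((u ^ (k+1) : Kˣ) : K) = ((u ^ k : Kˣ) : K) * (u : K) := by
        push_cast [pow_succ]; ring
      rw [this, hvalmul, ih, h, ← WithTop.coe_add]
      congr 1
      rw [add_smul, one_smul]
  cases n with
  | ofNat m => simpa using hnat m
  | negSucc k =>
    have hinv : ((u ^ (Int.negSucc k) : Kˣ) : K) * ((u ^ (k+1) : Kˣ) : K) = 1 := by
      rw [← Units.val_mul, zpow_negSucc]
      push_cast
      simp
    have := hvalmul ((u ^ (Int.negSucc k) : Kˣ) : K) ((u ^ (k+1) : Kˣ) : K)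
    rw [hinv, val_one' val hval0 hvalmul, hnat (k+1)] at this
    have hne : val ((u ^ (Int.negSucc k) : Kˣ) : K) ≠ ⊤ := by
      simp [hval0, Units.ne_zero]
    obtain ⟨g, hg⟩ := WithTop.ne_top_iff_exists.mp hne
    rw [← hg] at this ⊢
    rw [← WithTop.coe_add, eq_comm, WithTop.coe_eq_zero] at this
    rw [WithTop.coe_eq_coe]
    have : g = -((k+1 : ℕ) • c) := eq_neg_of_add_eq_zero_left this
    rw [this, Int.negSucc_eq]
    rw [neg_smul]
    norm_cast

include hval0 hvaladd in
lemma val_sum_ge {ι : Type*} (s : Finset ι) (t : ι → K) :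
    s.inf (fun i => val (t i)) ≤ val (∑ i ∈ s, t i) := by
  classical
  induction s using Finset.cons_induction with
  | empty => simp [(hval0 0).mpr rfl]
  | cons a s ha ih =>
    rw [Finset.sum_cons, Finset.inf_cons]
    exact le_trans (inf_le_inf_left _ ih) (hvaladd _ _)
end

/-- The value of a zero of `f` lies in the hypersurface associated to the
tropicalization of `f`; that is, `TV(f) ⊆ V(Tf)`. -/
theorem value_of_zero_mem_tropV {Γ : Type*} [AddCommGroup Γ] [LinearOrder Γ] [IsOrderedAddMonoid Γ]
    {K : Type*} [Field K] {N : ℕ}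
    (val : K → WithTop Γ)
    (hval0 : ∀ x : K, val x = ⊤ ↔ x = 0)
    (hvalmul : ∀ x y : K, val (x * y) = val x + val y)
    (hvaladd : ∀ x y : K, min (val x) (val y) ≤ val (x + y))
    (f : AddMonoidAlgebra K (Fin N → ℤ)) (hf : f ≠ 0)
    (x : Fin N → Kˣ) (hx : lEval f x = 0)
    (γ : Fin N → Γ) (hγ : ∀ i, val (x i : K) = WithTop.some (γ i)) :
    γ ∈ tropV val f := by
  classical
  have hval1 : val 1 = 0 := val_one' val hval0 hvalmul
  have hmon : ∀ α : Fin N → ℤ,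
      val ((∏ i, (x i) ^ (α i) : Kˣ) : K) = WithTop.some (tropDot α γ) := by
    intro α
    have key : ∀ s : Finset (Fin N),
        val ((∏ i ∈ s, (x i) ^ (α i) : Kˣ) : K) = WithTop.some (∑ i ∈ s, α i • γ i) := by
      intro s
      induction s using Finset.cons_induction with
      | empty => simpa using hval1
      | cons a s ha ih =>
        rw [Finset.prod_cons, Finset.sum_cons, Units.val_mul, hvalmul, ih,
          val_zpow' val hval0 hvalmul (x a) (γ a) (hγ a), ← WithTop.coe_add]
    simpa [tropDot] using key Finset.univ
  set t : (Fin N → ℤ) → K := fun α => f.coeff α * ((∏ i, (x i) ^ (α i) : Kˣ) : K) with ht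
  have hterm : ∀ α, val (t α) = val (f.coeff α) + WithTop.some (tropDot α γ) := by
    intro α; rw [ht]; simp only [hvalmul, hmon]
  set g : (Fin N → ℤ) → WithTop Γ := fun α => val (f.coeff α) + WithTop.some (tropDot α γ) with hg
  have hS : f.coeff.support.Nonempty := Finsupp.support_nonempty_iff.mpr (mt AddMonoidAlgebra.coeff_eq_zero.mp hf)
  obtain ⟨α₀, hα₀S, hα₀⟩ := Finset.exists_mem_eq_inf f.coeff.support hS g
  have hgne : ∀ α ∈ f.coeff.support, g α ≠ ⊤ := by
    intro α hα
    have : val (f.coeff α) ≠ ⊤ := by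
      simp only [Ne, hval0]; exact Finsupp.mem_support_iff.mp hα
    exact WithTop.add_ne_top.mpr ⟨this, WithTop.coe_ne_top⟩
  have hmtop : f.coeff.support.inf g < ⊤ := by
    rw [hα₀]; exact lt_top_iff_ne_top.mpr (hgne α₀ hα₀S)
  have key : ∃ β ∈ f.coeff.support, β ≠ α₀ ∧ f.coeff.support.inf g = g β := by
    by_contra hc
    push_neg at hc
    have hlt : ∀ β ∈ f.coeff.support.erase α₀, f.coeff.support.inf g < g β := by
      intro β hβ
      obtain ⟨hβne, hβS⟩ := Finset.mem_erase.mp hβ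
      exact lt_of_le_of_ne (Finset.inf_le hβS) (hc β hβS hβne)
    have hsum : ∑ β ∈ f.coeff.support.erase α₀, t β = - t α₀ := by
      have h0 := hx
      rw [lEval, ← Finset.add_sum_erase _ _ hα₀S] at h0
      simpa only [ht] using eq_neg_of_add_eq_zero_right h0
    have h1 : val (∑ β ∈ f.coeff.support.erase α₀, t β) = f.coeff.support.inf g := by
      rw [hsum]
      have hneg1 : val (-1 : K) = 0 := by
        have h := hvalmul (-1 : K) (-1)
        rw [neg_mul_neg, one_mul, hval1] at h
        have hne : val (-1 : K) ≠ ⊤ := by simp [hval0]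
        obtain ⟨c, hcv⟩ := WithTop.ne_top_iff_exists.mp hne
        rw [← hcv] at h ⊢
        rw [← WithTop.coe_add, eq_comm, WithTop.coe_eq_zero] at h
        rw [WithTop.coe_eq_zero]
        rcases lt_trichotomy c 0 with hlt | he | hgt
        · exact absurd h (add_neg hlt hlt).ne
        · exact he
        · exact absurd h (add_pos hgt hgt).ne'
      rw [← neg_one_mul, hvalmul, hneg1, zero_add, hterm, hα₀]
    have h2 := val_sum_ge val hval0 hvaladd (f.coeff.support.erase α₀) t
    rw [h1] at h2
    have h3 : f.coeff.support.inf g < (f.coeff.support.erase α₀).inf fun i => val (t i) := by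
      rw [Finset.lt_inf_iff hmtop]
      intro β hβ
      rw [hterm β]
      exact hlt β hβ
    exact absurd h2 (not_le.mpr h3)
  obtain ⟨β, hβS, hβne, hβ⟩ := key
  exact ⟨β, α₀, hβne, ⟨hβS, hβ⟩, ⟨hα₀S, hα₀⟩⟩
end

section
/- Let f, g be nonzero Laurent polynomials in N variables over the valued field K, let γ ∈ Γ^N, and let ω ∈ ℝ^N be a vector whose coordinates are linearly independent over ℚ. Choose α₀ ∈ D_γ(Tf) with ω·α₀ = min{ω·α : α ∈ D_γ(Tf)} and β₀ ∈ D_γ(Tg) with ω·β₀ = min{ω·β : β ∈ D_γ(Tg)}, and set η₀ := α₀ + β₀. Then η₀ ∈ D_γ(T(fg)) and ω·η₀ = min{ω·η : η ∈ D_γ(T(fg))}. -/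
open Finset Pointwise

section AuxVal
variable {Γ : Type*} [AddCommGroup Γ] [LinearOrder Γ] [IsOrderedAddMonoid Γ] {K : Type*} [Field K]
variable (val : K → WithTop Γ)

lemma myval_one (hval0 : ∀ x : K, val x = ⊤ ↔ x = 0)
    (hvalmul : ∀ x y : K, val (x * y) = val x + val y) : val 1 = 0 := by
  have h := hvalmul 1 1
  rw [one_mul] at h
  have hne : val 1 ≠ ⊤ := fun h' => one_ne_zero ((hval0 1).mp h')
  lift val 1 to Γ using hne with a ha
  rw [← WithTop.coe_add, WithTop.coe_eq_coe] at h
  have : a = 0 := (left_eq_add.mp h)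
  simp [this]

lemma myval_neg (hval0 : ∀ x : K, val x = ⊤ ↔ x = 0)
    (hvalmul : ∀ x y : K, val (x * y) = val x + val y) (x : K) : val (-x) = val x := by
  have hm1 : val (-1 : K) = 0 := by
    have h := hvalmul (-1) (-1)
    rw [neg_mul_neg, one_mul, myval_one val hval0 hvalmul] at h
    have hne : val (-1 : K) ≠ ⊤ := fun h' => (neg_ne_zero.mpr one_ne_zero) ((hval0 _).mp h')
    lift val (-1 : K) to Γ using hne with a ha
    rw [← WithTop.coe_add, ← WithTop.coe_zero, WithTop.coe_eq_coe] at h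
    have : a = 0 := by
      rcases lt_trichotomy a 0 with h1 | h1 | h1
      · exact absurd h (by simpa using (add_lt_add h1 h1).ne')
      · exact h1
      · exact absurd h (by simpa using (add_lt_add h1 h1).ne)
    simp [this]
  calc val (-x) = val ((-1) * x) := by rw [neg_one_mul]
  _ = val x := by rw [hvalmul, hm1, zero_add]

lemma myval_sum_le {ι : Type*}
    (hval0 : ∀ x : K, val x = ⊤ ↔ x = 0)
    (hvaladd : ∀ x y : K, min (val x) (val y) ≤ val (x + y))
    (s : Finset ι) (F : ι → K) (v C : WithTop Γ)
    (h : ∀ a ∈ s, v ≤ val (F a) + C) : v ≤ val (∑ a ∈ s, F a) + C := by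
  induction s using Finset.cons_induction with
  | empty => simp [(hval0 0).mpr rfl]
  | cons a s ha ih =>
    rw [Finset.sum_cons]
    have h1 : v ≤ val (F a) + C := h a (Finset.mem_cons_self a s)
    have h2 : v ≤ val (∑ b ∈ s, F b) + C := ih fun b hb => h b (Finset.mem_cons_of_mem hb)
    have hmin : min (val (F a)) (val (∑ b ∈ s, F b)) + C ≤ val (F a + ∑ b ∈ s, F b) + C :=
      add_le_add_left (hvaladd _ _) C
    refine le_trans ?_ hmin
    rcases min_cases (val (F a)) (val (∑ b ∈ s, F b)) with ⟨hm, _⟩ | ⟨hm, _⟩ <;> rw [hm]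
    · exact h1
    · exact h2

lemma myval_sum_lt {ι : Type*}
    (hval0 : ∀ x : K, val x = ⊤ ↔ x = 0)
    (hvaladd : ∀ x y : K, min (val x) (val y) ≤ val (x + y))
    (s : Finset ι) (F : ι → K) (v : WithTop Γ) (hv : v ≠ ⊤)
    (h : ∀ a ∈ s, v < val (F a)) : v < val (∑ a ∈ s, F a) := by
  induction s using Finset.cons_induction with
  | empty => simpa [(hval0 0).mpr rfl] using lt_top_iff_ne_top.mpr hv
  | cons a s ha ih =>
    rw [Finset.sum_cons]
    refine lt_of_lt_of_le ?_ (hvaladd _ _)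
    exact lt_min (h a (Finset.mem_cons_self a s)) (ih fun b hb => h b (Finset.mem_cons_of_mem hb))

lemma myval_sum_exists {ι : Type*}
    (hval0 : ∀ x : K, val x = ⊤ ↔ x = 0)
    (hvaladd : ∀ x y : K, min (val x) (val y) ≤ val (x + y))
    (s : Finset ι) (F : ι → K)
    (h : val (∑ a ∈ s, F a) ≠ ⊤) : ∃ a ∈ s, val (F a) ≤ val (∑ a ∈ s, F a) := by
  induction s using Finset.cons_induction with
  | empty => simp [(hval0 0).mpr rfl] at h
  | cons a s ha ih =>
    rw [Finset.sum_cons] at h ⊢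
    rcases min_cases (val (F a)) (val (∑ b ∈ s, F b)) with ⟨hm, hle⟩ | ⟨hm, hle⟩
    · exact ⟨a, Finset.mem_cons_self a s, le_trans (le_of_eq hm.symm) (hvaladd _ _)⟩
    · have hs : val (∑ b ∈ s, F b) ≤ val (F a + ∑ b ∈ s, F b) := le_trans (le_of_eq hm.symm) (hvaladd _ _)
      have hsne : val (∑ b ∈ s, F b) ≠ ⊤ := fun h' => h (top_le_iff.mp (h' ▸ hs))
      obtain ⟨b, hb, hble⟩ := ih hsne
      exact ⟨b, Finset.mem_cons_of_mem hb, hble.trans hs⟩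

lemma myval_sum_eq {ι : Type*} [DecidableEq ι]
    (hval0 : ∀ x : K, val x = ⊤ ↔ x = 0)
    (hvalmul : ∀ x y : K, val (x * y) = val x + val y)
    (hvaladd : ∀ x y : K, min (val x) (val y) ≤ val (x + y))
    (s : Finset ι) (F : ι → K) (a₀ : ι) (ha₀ : a₀ ∈ s) (hfin : val (F a₀) ≠ ⊤)
    (h : ∀ a ∈ s, a ≠ a₀ → val (F a₀) < val (F a)) :
    val (∑ a ∈ s, F a) = val (F a₀) := by
  rw [← Finset.add_sum_erase s F ha₀]
  set R := ∑ a ∈ s.erase a₀, F a with hR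
  have hRlt : val (F a₀) < val R :=
    myval_sum_lt val hval0 hvaladd _ _ _ hfin fun a haa =>
      h a (Finset.mem_of_mem_erase haa) (Finset.ne_of_mem_erase haa)
  have hge : val (F a₀) ≤ val (F a₀ + R) := le_trans (le_min le_rfl hRlt.le) (hvaladd _ _)
  have hle : val (F a₀ + R) ≤ val (F a₀) := by
    have h3 : min (val (F a₀ + R)) (val (-R)) ≤ val (F a₀) := by
      simpa [add_neg_cancel_right] using hvaladd (F a₀ + R) (-R)
    rw [myval_neg val hval0 hvalmul] at h3
    rcases min_cases (val (F a₀ + R)) (val R) with ⟨hm, _⟩ | ⟨hm, _⟩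
    · rw [hm] at h3; exact h3
    · rw [hm] at h3; exact absurd (lt_of_lt_of_le hRlt h3) (lt_irrefl _)
  exact le_antisymm hle hge

end AuxVal

lemma tropDot_add' {Γ : Type*} [AddCommGroup Γ] [LinearOrder Γ] [IsOrderedAddMonoid Γ] {N : ℕ}
    (α β : Fin N → ℤ) (γ : Fin N → Γ) :
    tropDot (α + β) γ = tropDot α γ + tropDot β γ := by
  simp [tropDot, add_smul, Finset.sum_add_distrib]

lemma rdot_add {N : ℕ} (α β : Fin N → ℤ) (ω : Fin N → ℝ) :
    ∑ i, ((α + β) i : ℝ) * ω i = ∑ i, (α i : ℝ) * ω i + ∑ i, (β i : ℝ) * ω i := by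
  rw [← Finset.sum_add_distrib]
  refine Finset.sum_congr rfl fun i _ => ?_
  push_cast [Pi.add_apply]
  ring

lemma rdot_inj {N : ℕ} (ω : Fin N → ℝ) (hω : LinearIndependent ℚ ω) {α β : Fin N → ℤ}
    (h : ∑ i, (α i : ℝ) * ω i = ∑ i, (β i : ℝ) * ω i) : α = β := by
  have h0 : ∑ i, (((α i : ℚ) - (β i : ℚ)) • ω i) = 0 := by
    have hterm : ∀ i ∈ Finset.univ, ((α i : ℚ) - (β i : ℚ)) • ω i
        = (α i : ℝ) * ω i - (β i : ℝ) * ω i := by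
      intro i _
      rw [Rat.smul_def]
      push_cast
      ring
    rw [Finset.sum_congr rfl hterm, Finset.sum_sub_distrib, h, sub_self]
  have key := Fintype.linearIndependent_iff.mp hω _ h0
  funext i
  have : (α i : ℚ) = (β i : ℚ) := sub_eq_zero.mp (key i)
  exact_mod_cast this

/-- Given `ω ∈ ℝ^N` with rationally independent coordinates, the sum `η₀ = α₀ + β₀` of
the `ω`-minimal exponents `α₀ ∈ D_γ(Tf)` and `β₀ ∈ D_γ(Tg)` belongs to `D_γ(T(fg))`
and is the `ω`-minimal exponent there. -/
theorem omega_minimal_sum_mem_tropD_mul {Γ : Type*} [AddCommGroup Γ] [LinearOrder Γ] [IsOrderedAddMonoid Γ]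
    {K : Type*} [Field K] {N : ℕ}
    (val : K → WithTop Γ)
    (hval0 : ∀ x : K, val x = ⊤ ↔ x = 0)
    (hvalmul : ∀ x y : K, val (x * y) = val x + val y)
    (hvaladd : ∀ x y : K, min (val x) (val y) ≤ val (x + y))
    (f g : AddMonoidAlgebra K (Fin N → ℤ)) (hf : f ≠ 0) (hg : g ≠ 0)
    (γ : Fin N → Γ)
    (ω : Fin N → ℝ) (hω : LinearIndependent ℚ ω)
    (α₀ β₀ : Fin N → ℤ)
    (hα₀ : α₀ ∈ tropD val f γ)
    (hα₀min : ∀ α ∈ tropD val f γ, ∑ i, (α₀ i : ℝ) * ω i ≤ ∑ i, (α i : ℝ) * ω i)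
    (hβ₀ : β₀ ∈ tropD val g γ)
    (hβ₀min : ∀ β ∈ tropD val g γ, ∑ i, (β₀ i : ℝ) * ω i ≤ ∑ i, (β i : ℝ) * ω i) :
    α₀ + β₀ ∈ tropD val (f * g) γ ∧
      ∀ η ∈ tropD val (f * g) γ,
        ∑ i, ((α₀ + β₀) i : ℝ) * ω i ≤ ∑ i, (η i : ℝ) * ω i := by
  classical
  obtain ⟨hα₀s, hα₀eq⟩ := hα₀
  obtain ⟨hβ₀s, hβ₀eq⟩ := hβ₀
  set Tf := tropicalize val f γ with hTfdef
  set Tg := tropicalize val g γ with hTgdef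
  have hfα₀ : f.coeff α₀ ≠ 0 := Finsupp.mem_support_iff.mp hα₀s
  have hgβ₀ : g.coeff β₀ ≠ 0 := Finsupp.mem_support_iff.mp hβ₀s
  have hvfα₀ : val (f.coeff α₀) ≠ ⊤ := fun h => hfα₀ ((hval0 _).mp h)
  have hvgβ₀ : val (g.coeff β₀) ≠ ⊤ := fun h => hgβ₀ ((hval0 _).mp h)
  have hTf_ne : Tf ≠ ⊤ := by
    rw [hα₀eq]; exact WithTop.add_ne_top.mpr ⟨hvfα₀, WithTop.coe_ne_top⟩
  have hTg_ne : Tg ≠ ⊤ := by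
    rw [hβ₀eq]; exact WithTop.add_ne_top.mpr ⟨hvgβ₀, WithTop.coe_ne_top⟩
  have hmul : ∀ η : Fin N → ℤ, (f * g).coeff η =
      ∑ p ∈ f.coeff.support ×ˢ g.coeff.support, if p.1 + p.2 = η then f.coeff p.1 * g.coeff p.2 else 0 := by
    intro η
    rw [AddMonoidAlgebra.mul_apply, Finset.sum_product]
    rfl
  -- Fact A : lower bound for every coefficient of the product
  have factA : ∀ η : Fin N → ℤ, Tf + Tg ≤ val ((f * g).coeff η) + WithTop.some (tropDot η γ) := by
    intro η
    rw [hmul η]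
    apply myval_sum_le val hval0 hvaladd
    intro p hp
    rcases Finset.mem_product.mp hp with ⟨hp1, hp2⟩
    by_cases hpe : p.1 + p.2 = η
    · rw [if_pos hpe, hvalmul]
      calc Tf + Tg
          ≤ (val (f.coeff p.1) + WithTop.some (tropDot p.1 γ))
            + (val (g.coeff p.2) + WithTop.some (tropDot p.2 γ)) :=
            add_le_add (Finset.inf_le hp1) (Finset.inf_le hp2)
        _ = val (f.coeff p.1) + val (g.coeff p.2) + WithTop.some (tropDot η γ) := by
            rw [← hpe, tropDot_add', WithTop.coe_add]
            abel
    · rw [if_neg hpe, (hval0 0).mpr rfl, top_add]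
      exact le_top
  -- Fact B : the coefficient of the product at α₀ + β₀
  have factB : val ((f * g).coeff (α₀ + β₀)) = val (f.coeff α₀) + val (g.coeff β₀) := by
    rw [hmul (α₀ + β₀)]
    have hmem : ((α₀, β₀) : (Fin N → ℤ) × (Fin N → ℤ)) ∈ f.coeff.support ×ˢ g.coeff.support :=
      Finset.mem_product.mpr ⟨hα₀s, hβ₀s⟩
    have hif : (if ((α₀, β₀) : (Fin N → ℤ) × (Fin N → ℤ)).1 + ((α₀, β₀) : (Fin N → ℤ) × (Fin N → ℤ)).2 = α₀ + β₀
        then f.coeff ((α₀, β₀) : (Fin N → ℤ) × (Fin N → ℤ)).1 * g.coeff ((α₀, β₀) : (Fin N → ℤ) × (Fin N → ℤ)).2 else 0) = f.coeff α₀ * g.coeff β₀ := if_pos rfl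
    have hres := myval_sum_eq val hval0 hvalmul hvaladd (f.coeff.support ×ˢ g.coeff.support)
      (fun p => if p.1 + p.2 = α₀ + β₀ then f.coeff p.1 * g.coeff p.2 else 0) (α₀, β₀) hmem ?_ ?_
    · rw [hres]
      simp only [hif, if_true]
      exact hvalmul _ _
    · simp only [hif, if_true]
      rw [hvalmul]
      exact WithTop.add_ne_top.mpr ⟨hvfα₀, hvgβ₀⟩
    · intro p hp hne
      rcases Finset.mem_product.mp hp with ⟨hp1, hp2⟩
      simp only [hif, if_true]
      by_cases hpe : p.1 + p.2 = α₀ + β₀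
      · rw [if_pos hpe, hvalmul, hvalmul]
        have key : val (f.coeff α₀) + val (g.coeff β₀) + WithTop.some (tropDot (α₀ + β₀) γ)
            < val (f.coeff p.1) + val (g.coeff p.2) + WithTop.some (tropDot (α₀ + β₀) γ) := by
          have hL : val (f.coeff α₀) + val (g.coeff β₀) + WithTop.some (tropDot (α₀ + β₀) γ) = Tf + Tg := by
            rw [tropDot_add', WithTop.coe_add, hα₀eq, hβ₀eq]
            abel
          have hR : val (f.coeff p.1) + val (g.coeff p.2) + WithTop.some (tropDot (α₀ + β₀) γ)
              = (val (f.coeff p.1) + WithTop.some (tropDot p.1 γ))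
                + (val (g.coeff p.2) + WithTop.some (tropDot p.2 γ)) := by
            rw [← hpe, tropDot_add', WithTop.coe_add]
            abel
          rw [hL, hR]
          have h1 : Tf ≤ val (f.coeff p.1) + WithTop.some (tropDot p.1 γ) := Finset.inf_le hp1
          have h2 : Tg ≤ val (g.coeff p.2) + WithTop.some (tropDot p.2 γ) := Finset.inf_le hp2
          have hnotboth : ¬(Tf = val (f.coeff p.1) + WithTop.some (tropDot p.1 γ)
              ∧ Tg = val (g.coeff p.2) + WithTop.some (tropDot p.2 γ)) := by
            rintro ⟨e1, e2⟩
            have m1 := hα₀min p.1 ⟨hp1, e1⟩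
            have m2 := hβ₀min p.2 ⟨hp2, e2⟩
            have hsum : ∑ i, (p.1 i : ℝ) * ω i + ∑ i, (p.2 i : ℝ) * ω i
                = ∑ i, (α₀ i : ℝ) * ω i + ∑ i, (β₀ i : ℝ) * ω i := by
              rw [← rdot_add, ← rdot_add, hpe]
            have e3 : ∑ i, (p.1 i : ℝ) * ω i = ∑ i, (α₀ i : ℝ) * ω i :=
              le_antisymm (by linarith) m1
            have e4 : ∑ i, (p.2 i : ℝ) * ω i = ∑ i, (β₀ i : ℝ) * ω i :=
              le_antisymm (by linarith) m2
            exact hne (Prod.ext (rdot_inj ω hω e3) (rdot_inj ω hω e4))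
          rcases lt_or_eq_of_le h1 with hlt | heq
          · exact WithTop.add_lt_add_of_lt_of_le hTg_ne hlt h2
          · rcases lt_or_eq_of_le h2 with hlt2 | heq2
            · exact WithTop.add_lt_add_of_le_of_lt hTf_ne h1 hlt2
            · exact absurd ⟨heq, heq2⟩ hnotboth
        exact (WithTop.add_lt_add_iff_right WithTop.coe_ne_top).mp key
      · rw [if_neg hpe, (hval0 0).mpr rfl]
        rw [hvalmul]
        exact lt_top_iff_ne_top.mpr (WithTop.add_ne_top.mpr ⟨hvfα₀, hvgβ₀⟩)
  have hvη₀ : val ((f * g).coeff (α₀ + β₀)) ≠ ⊤ := by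
    rw [factB]; exact WithTop.add_ne_top.mpr ⟨hvfα₀, hvgβ₀⟩
  have hη₀supp : (α₀ + β₀) ∈ (f * g).coeff.support :=
    Finsupp.mem_support_iff.mpr fun h0 => hvη₀ ((hval0 _).mpr h0)
  have hvalη₀ : val ((f * g).coeff (α₀ + β₀)) + WithTop.some (tropDot (α₀ + β₀) γ) = Tf + Tg := by
    rw [factB, tropDot_add', WithTop.coe_add, hα₀eq, hβ₀eq]
    abel
  have hTfg : tropicalize val (f * g) γ = Tf + Tg := by
    apply le_antisymm
    · exact le_trans (Finset.inf_le hη₀supp) (le_of_eq hvalη₀)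
    · exact Finset.le_inf fun η _ => factA η
  constructor
  · exact ⟨hη₀supp, by rw [hTfg, ← hvalη₀]⟩
  · intro η hη
    obtain ⟨hηs, hηeq⟩ := hη
    have hvη : val ((f * g).coeff η) ≠ ⊤ := fun h0 => (Finsupp.mem_support_iff.mp hηs) ((hval0 _).mp h0)
    obtain ⟨p, hp, hple⟩ := myval_sum_exists val hval0 hvaladd (f.coeff.support ×ˢ g.coeff.support)
      (fun p => if p.1 + p.2 = η then f.coeff p.1 * g.coeff p.2 else 0) (by rw [← hmul η]; exact hvη)
    rw [← hmul η] at hple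
    rcases Finset.mem_product.mp hp with ⟨hp1, hp2⟩
    by_cases hpe : p.1 + p.2 = η
    swap
    · simp only [if_neg hpe, (hval0 0).mpr rfl] at hple
      exact absurd (top_le_iff.mp hple) hvη
    simp only [if_pos hpe, hvalmul] at hple
    have hle2 : (val (f.coeff p.1) + WithTop.some (tropDot p.1 γ))
        + (val (g.coeff p.2) + WithTop.some (tropDot p.2 γ)) ≤ Tf + Tg := by
      calc (val (f.coeff p.1) + WithTop.some (tropDot p.1 γ))
            + (val (g.coeff p.2) + WithTop.some (tropDot p.2 γ))
          = val (f.coeff p.1) + val (g.coeff p.2) + WithTop.some (tropDot η γ) := by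
            rw [← hpe, tropDot_add', WithTop.coe_add]
            abel
        _ ≤ val ((f * g).coeff η) + WithTop.some (tropDot η γ) :=
            add_le_add_left hple _
        _ = Tf + Tg := by rw [← hηeq, hTfg]
    have h1 : Tf ≤ val (f.coeff p.1) + WithTop.some (tropDot p.1 γ) := Finset.inf_le hp1
    have h2 : Tg ≤ val (g.coeff p.2) + WithTop.some (tropDot p.2 γ) := Finset.inf_le hp2
    have e1 : Tf = val (f.coeff p.1) + WithTop.some (tropDot p.1 γ) := by
      by_contra hne
      have hlt := lt_of_le_of_ne h1 hne
      exact absurd (lt_of_lt_of_le (WithTop.add_lt_add_of_lt_of_le hTg_ne hlt h2) hle2)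
        (lt_irrefl _)
    have e2 : Tg = val (g.coeff p.2) + WithTop.some (tropDot p.2 γ) := by
      by_contra hne
      have hlt := lt_of_le_of_ne h2 hne
      exact absurd (lt_of_lt_of_le (WithTop.add_lt_add_of_le_of_lt hTf_ne h1 hlt) hle2)
        (lt_irrefl _)
    have m1 := hα₀min p.1 ⟨hp1, e1⟩
    have m2 := hβ₀min p.2 ⟨hp2, e2⟩
    have hηdot : ∑ i, (η i : ℝ) * ω i = ∑ i, (p.1 i : ℝ) * ω i + ∑ i, (p.2 i : ℝ) * ω i := by
      rw [← rdot_add, hpe]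
    rw [rdot_add, hηdot]
    linarith
end

section
/- Kapranov's theorem in one variable: Let K be an algebraically closed field with a Krull valuation val : K → Γ ∪ {∞}. For every nonzero polynomial f ∈ K[x], the hypersurface associated to the tropicalization of f equals the set of values of the nonzero roots of f: V(Tf) = TV(f) = {val(a) : a ∈ K∖{0}, f(a) = 0}. Explicitly, γ ∈ Γ satisfies that the minimum min_{i ∈ E(f)} (val(φ_i) + iγ) over the exponents i with nonzero coefficient φ_i is attained at least twice if and only if γ = val(a) for some nonzero root a of f. -/
open Finset Polynomial

/-- The tropicalization of a one-variable polynomial `f ∈ K[x]`, evaluated at `γ ∈ Γ`: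
`Tf(γ) = min_{i ∈ E(f)} (val φ_i + iγ)`, computed in `Γ ∪ {∞}`. -/
noncomputable def polyTrop {Γ : Type*} [AddCommGroup Γ] [LinearOrder Γ] [IsOrderedAddMonoid Γ]
    {K : Type*} [Field K] (val : K → WithTop Γ) (f : Polynomial K) (γ : Γ) : WithTop Γ :=
  f.support.inf fun i => val (f.coeff i) + WithTop.some (i • γ)

/-- `D_γ(Tf)` for a one-variable polynomial: the exponents at which the minimum
defining `Tf(γ)` is attained. -/
def polyTropD {Γ : Type*} [AddCommGroup Γ] [LinearOrder Γ] [IsOrderedAddMonoid Γ]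
    {K : Type*} [Field K] (val : K → WithTop Γ) (f : Polynomial K) (γ : Γ) : Set ℕ :=
  {i | i ∈ f.support ∧ polyTrop val f γ = val (f.coeff i) + WithTop.some (i • γ)}

section Aux

variable {Γ : Type*} [AddCommGroup Γ] [LinearOrder Γ] [IsOrderedAddMonoid Γ] {K : Type*} [Field K]

/-- "The minimum is attained at least twice". -/
def DTwo (val : K → WithTop Γ) (f : Polynomial K) (γ : Γ) : Prop :=
  ∃ i j : ℕ, i ≠ j ∧ i ∈ polyTropD val f γ ∧ j ∈ polyTropD val f γ

lemma val_zero' (val : K → WithTop Γ) (hval0 : ∀ x : K, val x = ⊤ ↔ x = 0) :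
    val 0 = ⊤ := (hval0 0).2 rfl

lemma val_one'_s8 (val : K → WithTop Γ) (hval0 : ∀ x : K, val x = ⊤ ↔ x = 0)
    (hvalmul : ∀ x y : K, val (x * y) = val x + val y) : val 1 = 0 := by
  have h := hvalmul 1 1
  rw [mul_one] at h
  rcases (eq_or_ne (val 1) ⊤) with ht | ht
  · exact absurd ((hval0 1).1 ht) one_ne_zero
  · lift val 1 to Γ using ht with c hc
    rw [← WithTop.coe_add, WithTop.coe_eq_coe] at h
    have : (0 : Γ) = c := add_left_cancel (a := c) (by rw [add_zero]; exact h)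
    exact_mod_cast this.symm

lemma val_neg' (val : K → WithTop Γ) (hval0 : ∀ x : K, val x = ⊤ ↔ x = 0)
    (hvalmul : ∀ x y : K, val (x * y) = val x + val y) (x : K) : val (-x) = val x := by
  have h1 : val (-1 : K) = 0 := by
    have h := hvalmul (-1) (-1)
    rw [neg_mul_neg, one_mul, val_one'_s8 val hval0 hvalmul] at h
    rcases (eq_or_ne (val (-1 : K)) ⊤) with ht | ht
    · exact absurd ((hval0 _).1 ht) (by norm_num)
    · lift val (-1 : K) to Γ using ht with c hc
      rw [← WithTop.coe_add, ← WithTop.coe_zero, WithTop.coe_eq_coe] at h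
      have hcc : c + c = 0 := h.symm
      have : c = 0 := by
        rcases lt_trichotomy c 0 with hlt | he | hgt
        · exact absurd hcc (ne_of_lt (by simpa using add_lt_add hlt hlt))
        · exact he
        · exact absurd hcc (ne_of_gt (by simpa using add_lt_add hgt hgt))
      exact_mod_cast this
  have : -x = (-1 : K) * x := by ring
  rw [this, hvalmul, h1, zero_add]

lemma val_pow' (val : K → WithTop Γ) (hval0 : ∀ x : K, val x = ⊤ ↔ x = 0)
    (hvalmul : ∀ x y : K, val (x * y) = val x + val y)
    {a : K} {γ : Γ} (ha : val a = WithTop.some γ) (n : ℕ) :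
    val (a ^ n) = WithTop.some (n • γ) := by
  induction n with
  | zero => simpa using val_one'_s8 val hval0 hvalmul
  | succ n ih =>
      rw [pow_succ, hvalmul, ih, ha, succ_nsmul, WithTop.coe_add]

lemma le_val_sum' (val : K → WithTop Γ)
    (hval0 : ∀ x : K, val x = ⊤ ↔ x = 0)
    (hvaladd : ∀ x y : K, min (val x) (val y) ≤ val (x + y))
    {ι : Type*} (t : Finset ι) (F : ι → K) (c d : WithTop Γ)
    (h : ∀ i ∈ t, c ≤ val (F i) + d) : c ≤ val (∑ i ∈ t, F i) + d := by
  classical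
  induction t using Finset.induction_on with
  | empty => simp [val_zero' val hval0]
  | @insert a s hnot ih =>
      rw [Finset.sum_insert hnot]
      have hmin := hvaladd (F a) (∑ i ∈ s, F i)
      have h1 := h a (Finset.mem_insert_self a s)
      have h2 := ih fun i hi => h i (Finset.mem_insert_of_mem hi)
      rcases min_cases (val (F a)) (val (∑ i ∈ s, F i)) with ⟨he, _⟩ | ⟨he, _⟩ <;>
        [exact le_trans h1 (add_le_add_left (he ▸ hmin) d);
         exact le_trans h2 (add_le_add_left (he ▸ hmin) d)]

lemma lt_val_sum' (val : K → WithTop Γ)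
    (hval0 : ∀ x : K, val x = ⊤ ↔ x = 0)
    (hvaladd : ∀ x y : K, min (val x) (val y) ≤ val (x + y))
    {ι : Type*} (t : Finset ι) (F : ι → K) (c d : WithTop Γ) (hc : c ≠ ⊤)
    (h : ∀ i ∈ t, c < val (F i) + d) : c < val (∑ i ∈ t, F i) + d := by
  classical
  induction t using Finset.induction_on with
  | empty => simp [val_zero' val hval0, lt_top_iff_ne_top, hc]
  | @insert a s hnot ih =>
      rw [Finset.sum_insert hnot]
      have hmin := hvaladd (F a) (∑ i ∈ s, F i)
      have h1 := h a (Finset.mem_insert_self a s)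
      have h2 := ih fun i hi => h i (Finset.mem_insert_of_mem hi)
      rcases min_cases (val (F a)) (val (∑ i ∈ s, F i)) with ⟨he, _⟩ | ⟨he, _⟩ <;>
        [exact lt_of_lt_of_le h1 (add_le_add_left (he ▸ hmin) d);
         exact lt_of_lt_of_le h2 (add_le_add_left (he ▸ hmin) d)]

lemma val_add_left' (val : K → WithTop Γ)
    (hval0 : ∀ x : K, val x = ⊤ ↔ x = 0)
    (hvalmul : ∀ x y : K, val (x * y) = val x + val y)
    (hvaladd : ∀ x y : K, min (val x) (val y) ≤ val (x + y))
    {x y : K} (h : val x < val y) : val (x + y) = val x := by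
  refine le_antisymm ?_ ?_
  · by_contra hlt
    push_neg at hlt
    have h2 := hvaladd (x + y) (-y)
    rw [add_neg_cancel_right, val_neg' val hval0 hvalmul] at h2
    exact absurd h2 (not_le_of_gt (lt_min hlt h))
  · exact le_trans (le_min le_rfl h.le) (hvaladd x y)

lemma val_sum_eq' (val : K → WithTop Γ)
    (hval0 : ∀ x : K, val x = ⊤ ↔ x = 0)
    (hvalmul : ∀ x y : K, val (x * y) = val x + val y)
    (hvaladd : ∀ x y : K, min (val x) (val y) ≤ val (x + y))
    {ι : Type*} (t : Finset ι) (F : ι → K) (i₀ : ι) (h₀ : i₀ ∈ t)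
    (hne : val (F i₀) ≠ ⊤)
    (h : ∀ i ∈ t, i ≠ i₀ → val (F i₀) < val (F i)) :
    val (∑ i ∈ t, F i) = val (F i₀) := by
  classical
  rw [← Finset.add_sum_erase t F h₀]
  have hrest : val (F i₀) < val (∑ i ∈ t.erase i₀, F i) := by
    have := lt_val_sum' val hval0 hvaladd (t.erase i₀) F (val (F i₀)) 0 hne
      (fun i hi => by
        rw [add_zero]
        exact h i (Finset.mem_of_mem_erase hi) (Finset.ne_of_mem_erase hi))
    rwa [add_zero] at this
  exact val_add_left' val hval0 hvalmul hvaladd hrest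

lemma trop_le (val : K → WithTop Γ) (hval0 : ∀ x : K, val x = ⊤ ↔ x = 0)
    (f : Polynomial K) (γ : Γ) (i : ℕ) :
    polyTrop val f γ ≤ val (f.coeff i) + WithTop.some (i • γ) := by
  by_cases hi : i ∈ f.support
  · exact Finset.inf_le hi
  · rw [Polynomial.notMem_support_iff.1 hi, val_zero' val hval0]
    simp

lemma trop_ne_top (val : K → WithTop Γ) (hval0 : ∀ x : K, val x = ⊤ ↔ x = 0)
    {f : Polynomial K} (hf : f ≠ 0) (γ : Γ) : polyTrop val f γ ≠ ⊤ := by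
  obtain ⟨i, hi⟩ := (Polynomial.support_nonempty.2 hf)
  have h1 : polyTrop val f γ ≤ val (f.coeff i) + WithTop.some (i • γ) := Finset.inf_le hi
  have h2 : val (f.coeff i) + WithTop.some (i • γ) ≠ ⊤ :=
    WithTop.add_ne_top.2 ⟨fun ht => (Polynomial.mem_support_iff.1 hi) ((hval0 _).1 ht),
      WithTop.coe_ne_top⟩
  exact fun ht => h2 (top_le_iff.1 (ht ▸ h1))

lemma exists_mem_D (val : K → WithTop Γ) {f : Polynomial K} (hf : f ≠ 0) (γ : Γ) :
    ∃ i, i ∈ polyTropD val f γ := by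
  obtain ⟨i, hi, he⟩ := Finset.exists_mem_eq_inf f.support (Polynomial.support_nonempty.2 hf)
    (fun i => val (f.coeff i) + WithTop.some (i • γ))
  exact ⟨i, hi, he⟩

/-- Uniqueness of the minimizer when `¬ DTwo`: strict inequality off `i₀`. -/
lemma strict_off_min (val : K → WithTop Γ) (hval0 : ∀ x : K, val x = ⊤ ↔ x = 0)
    {f : Polynomial K} (hf : f ≠ 0) (γ : Γ) (hnd : ¬ DTwo val f γ)
    {i₀ : ℕ} (h₀ : i₀ ∈ polyTropD val f γ) :
    ∀ i : ℕ, i ≠ i₀ → polyTrop val f γ < val (f.coeff i) + WithTop.some (i • γ) := by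
  intro i hi
  rcases lt_or_eq_of_le (trop_le val hval0 f γ i) with h | h
  · exact h
  · by_cases hmem : i ∈ f.support
    · exact absurd ⟨i, i₀, hi, ⟨hmem, h⟩, h₀⟩ hnd
    · exfalso
      rw [Polynomial.notMem_support_iff.1 hmem, val_zero' val hval0] at h
      simp at h
      exact trop_ne_top val hval0 hf γ h

/-- Easy direction: a nonzero root of value `γ` forces the minimum to be attained twice. -/
lemma root_imp_DTwo (val : K → WithTop Γ)
    (hval0 : ∀ x : K, val x = ⊤ ↔ x = 0)
    (hvalmul : ∀ x y : K, val (x * y) = val x + val y)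
    (hvaladd : ∀ x y : K, min (val x) (val y) ≤ val (x + y))
    {f : Polynomial K} (hf : f ≠ 0) {γ : Γ} {a : K}
    (ha : a ≠ 0) (hroot : f.eval a = 0) (hva : val a = WithTop.some γ) :
    DTwo val f γ := by
  by_contra hnd
  obtain ⟨i₀, h₀⟩ := exists_mem_D val hf γ
  have hstrict := strict_off_min val hval0 hf γ hnd h₀
  have heval : f.eval a = ∑ i ∈ f.support, f.coeff i * a ^ i := by
    rw [Polynomial.eval_eq_sum, Polynomial.sum_def]
  have hvF : ∀ i : ℕ, val (f.coeff i * a ^ i) = val (f.coeff i) + WithTop.some (i • γ) := by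
    intro i
    rw [hvalmul, val_pow' val hval0 hvalmul hva]
  have hne : val (f.coeff i₀ * a ^ i₀) ≠ ⊤ := by
    rw [hvF, ← h₀.2]; exact trop_ne_top val hval0 hf γ
  have := val_sum_eq' val hval0 hvalmul hvaladd f.support (fun i => f.coeff i * a ^ i)
    i₀ h₀.1 hne (fun i _ hi => by
      rw [hvF, hvF, ← h₀.2]
      exact hstrict i hi)
  rw [← heval, hroot, val_zero' val hval0] at this
  exact hne this.symm

/-- Two attaining exponents for `X - C a` forces `a ≠ 0` and `val a = γ`. -/
lemma DTwo_linear (val : K → WithTop Γ)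
    (hval0 : ∀ x : K, val x = ⊤ ↔ x = 0)
    (hvalmul : ∀ x y : K, val (x * y) = val x + val y)
    {a : K} {γ : Γ} (h : DTwo val (X - C a) γ) :
    a ≠ 0 ∧ val a = WithTop.some γ := by
  obtain ⟨i, j, hij, ⟨hi, hei⟩, ⟨hj, hej⟩⟩ := h
  have hsupp : (X - C a).support ⊆ {0, 1} := by
    intro k hk
    have := Polynomial.le_natDegree_of_mem_supp k hk
    rw [Polynomial.natDegree_X_sub_C] at this
    interval_cases k <;> simp
  have hi' := hsupp hi
  have hj' := hsupp hj
  simp only [Finset.mem_insert, Finset.mem_singleton] at hi' hj'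
  have h01 : (0 : ℕ) ∈ (X - C a).support ∧ (1 : ℕ) ∈ (X - C a).support ∧
      polyTrop val (X - C a) γ = val ((X - C a).coeff 0) + WithTop.some ((0:ℕ) • γ) ∧
      polyTrop val (X - C a) γ = val ((X - C a).coeff 1) + WithTop.some ((1:ℕ) • γ) := by
    rcases hi' with rfl | rfl <;> rcases hj' with rfl | rfl <;>
      first | (exact absurd rfl hij) | exact ⟨hi, hj, hei, hej⟩ | exact ⟨hj, hi, hej, hei⟩
  obtain ⟨hm0, _, he0, he1⟩ := h01
  have hc0 : (X - C a).coeff 0 = -a := by simp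
  have hc1 : (X - C a).coeff 1 = 1 := by simp
  have ha : a ≠ 0 := by
    intro h0
    rw [Polynomial.mem_support_iff, hc0, h0, neg_zero] at hm0
    exact hm0 rfl
  refine ⟨ha, ?_⟩
  have := he0.symm.trans he1
  rw [hc0, hc1, val_neg' val hval0 hvalmul, val_one'_s8 val hval0 hvalmul,
    zero_smul, one_smul, WithTop.coe_zero, add_zero, zero_add] at this
  exact this

/-- Multiplicativity: if neither factor attains twice, the product doesn't either. -/
lemma DTwo_mul (val : K → WithTop Γ)
    (hval0 : ∀ x : K, val x = ⊤ ↔ x = 0)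
    (hvalmul : ∀ x y : K, val (x * y) = val x + val y)
    (hvaladd : ∀ x y : K, min (val x) (val y) ≤ val (x + y))
    {f g : Polynomial K} (hf : f ≠ 0) (hg : g ≠ 0) (γ : Γ)
    (hDf : ¬ DTwo val f γ) (hDg : ¬ DTwo val g γ) : ¬ DTwo val (f * g) γ := by
  classical
  obtain ⟨i₀, hDi₀⟩ := exists_mem_D val hf γ
  obtain ⟨j₀, hDj₀⟩ := exists_mem_D val hg γ
  have hsf := strict_off_min val hval0 hf γ hDf hDi₀
  have hsg := strict_off_min val hval0 hg γ hDg hDj₀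
  set Tf := polyTrop val f γ with hTf
  set Tg := polyTrop val g γ with hTg
  have hTf_ne : Tf ≠ ⊤ := trop_ne_top val hval0 hf γ
  have hTg_ne : Tg ≠ ⊤ := trop_ne_top val hval0 hg γ
  -- value of a single product term, shifted by (i+j) γ
  have hterm : ∀ (i j : ℕ), val (f.coeff i * g.coeff j) + WithTop.some ((i + j) • γ)
      = (val (f.coeff i) + WithTop.some (i • γ)) + (val (g.coeff j) + WithTop.some (j • γ)) := by
    intro i j
    rw [hvalmul, add_nsmul, WithTop.coe_add]
    abel
  -- lower bound for every coefficient of the product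
  have hlow : ∀ k : ℕ, Tf + Tg ≤ val ((f * g).coeff k) + WithTop.some (k • γ) := by
    intro k
    rw [Polynomial.coeff_mul]
    refine le_val_sum' val hval0 hvaladd _ _ _ _ (fun p hp => ?_)
    have hpk : p.1 + p.2 = k := Finset.HasAntidiagonal.mem_antidiagonal.1 hp
    rw [← hpk, hterm p.1 p.2]
    exact add_le_add (trop_le val hval0 f γ p.1) (trop_le val hval0 g γ p.2)
  -- strict bound away from (i₀, j₀)
  have hstrict : ∀ (k : ℕ), k ≠ i₀ + j₀ →
      Tf + Tg < val ((f * g).coeff k) + WithTop.some (k • γ) := by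
    intro k hk
    rw [Polynomial.coeff_mul]
    refine lt_val_sum' val hval0 hvaladd _ _ _ _ (WithTop.add_ne_top.2 ⟨hTf_ne, hTg_ne⟩)
      (fun p hp => ?_)
    have hpk : p.1 + p.2 = k := Finset.HasAntidiagonal.mem_antidiagonal.1 hp
    rw [← hpk, hterm p.1 p.2]
    have hne : p.1 ≠ i₀ ∨ p.2 ≠ j₀ := by
      by_contra hc
      push_neg at hc
      exact hk (by rw [← hpk, hc.1, hc.2])
    rcases hne with h1 | h2
    · calc Tf + Tg < (val (f.coeff p.1) + WithTop.some (p.1 • γ)) + Tg :=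
            WithTop.add_lt_add_right hTg_ne (hsf p.1 h1)
        _ ≤ _ := add_le_add_right (trop_le val hval0 g γ p.2) _
    · calc Tf + Tg < Tf + (val (g.coeff p.2) + WithTop.some (p.2 • γ)) :=
            WithTop.add_lt_add_left hTf_ne (hsg p.2 h2)
        _ ≤ _ := add_le_add_left (trop_le val hval0 f γ p.1) _
  -- exact value at i₀ + j₀
  have hAB : val ((f * g).coeff (i₀ + j₀)) = val (f.coeff i₀) + val (g.coeff j₀) := by
    rw [Polynomial.coeff_mul]
    have hmem : ((i₀, j₀) : ℕ × ℕ) ∈ antidiagonal (i₀ + j₀) := Finset.HasAntidiagonal.mem_antidiagonal.2 rfl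
    have hne : val (f.coeff i₀ * g.coeff j₀) ≠ ⊤ := by
      rw [hvalmul]
      exact WithTop.add_ne_top.2
        ⟨fun ht => (Polynomial.mem_support_iff.1 hDi₀.1) ((hval0 _).1 ht),
         fun ht => (Polynomial.mem_support_iff.1 hDj₀.1) ((hval0 _).1 ht)⟩
    rw [val_sum_eq' val hval0 hvalmul hvaladd _ _ (i₀, j₀) hmem hne ?_, hvalmul]
    intro p hp hpne
    have hpk : p.1 + p.2 = i₀ + j₀ := Finset.HasAntidiagonal.mem_antidiagonal.1 hp
    have h1 : p.1 ≠ i₀ := by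
      intro h
      exact hpne (Prod.ext h (by omega))
    -- compare after adding (i₀+j₀) • γ on both sides
    have key : val (f.coeff i₀ * g.coeff j₀) + WithTop.some ((i₀ + j₀) • γ)
        < val (f.coeff p.1 * g.coeff p.2) + WithTop.some ((i₀ + j₀) • γ) := by
      calc val (f.coeff i₀ * g.coeff j₀) + WithTop.some ((i₀ + j₀) • γ)
          = (val (f.coeff i₀) + WithTop.some (i₀ • γ))
            + (val (g.coeff j₀) + WithTop.some (j₀ • γ)) := hterm i₀ j₀
        _ = Tf + Tg := by rw [← hDi₀.2, ← hDj₀.2]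
        _ < (val (f.coeff p.1) + WithTop.some (p.1 • γ)) + Tg :=
            WithTop.add_lt_add_right hTg_ne (hsf p.1 h1)
        _ ≤ (val (f.coeff p.1) + WithTop.some (p.1 • γ))
            + (val (g.coeff p.2) + WithTop.some (p.2 • γ)) :=
            add_le_add_right (trop_le val hval0 g γ p.2) _
        _ = val (f.coeff p.1 * g.coeff p.2) + WithTop.some ((p.1 + p.2) • γ) :=
            (hterm p.1 p.2).symm
        _ = val (f.coeff p.1 * g.coeff p.2) + WithTop.some ((i₀ + j₀) • γ) := by rw [hpk]
    exact lt_of_add_lt_add_right key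
  have hval_k₀ : val ((f * g).coeff (i₀ + j₀)) + WithTop.some ((i₀ + j₀) • γ) = Tf + Tg := by
    have e := hterm i₀ j₀
    rw [hvalmul] at e
    rw [hAB, e, ← hDi₀.2, ← hDj₀.2]
  have hk₀supp : (i₀ + j₀) ∈ (f * g).support := by
    rw [Polynomial.mem_support_iff]
    intro h0
    rw [h0, val_zero' val hval0] at hAB
    exact WithTop.add_ne_top.2
      ⟨fun ht => (Polynomial.mem_support_iff.1 hDi₀.1) ((hval0 _).1 ht),
       fun ht => (Polynomial.mem_support_iff.1 hDj₀.1) ((hval0 _).1 ht)⟩ hAB.symm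
  -- T(fg) = Tf + Tg
  have hTfg : polyTrop val (f * g) γ = Tf + Tg := by
    refine le_antisymm ?_ (Finset.le_inf fun k _ => hlow k)
    calc polyTrop val (f * g) γ
        ≤ val ((f * g).coeff (i₀ + j₀)) + WithTop.some ((i₀ + j₀) • γ) :=
          Finset.inf_le hk₀supp
      _ = Tf + Tg := hval_k₀
  -- conclude
  rintro ⟨i, j, hij, ⟨_, hei⟩, ⟨_, hej⟩⟩
  have hik : i = i₀ + j₀ := by
    by_contra h
    exact absurd (hTfg ▸ hei) (ne_of_lt (hstrict i h))
  have hjk : j = i₀ + j₀ := by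
    by_contra h
    exact absurd (hTfg ▸ hej) (ne_of_lt (hstrict j h))
  exact hij (hik.trans hjk.symm)

end Aux

/-- Kapranov's theorem in one variable: for an algebraically closed valued field `K`
and a nonzero `f ∈ K[x]`, the minimum defining `Tf(γ)` is attained at least twice
if and only if `γ` is the value of a nonzero root of `f`:  `V(Tf) = TV(f)`. -/
theorem kapranov_one_variable {Γ : Type*} [AddCommGroup Γ] [LinearOrder Γ] [IsOrderedAddMonoid Γ]
    {K : Type*} [Field K] [IsAlgClosed K]
    (val : K → WithTop Γ)
    (hval0 : ∀ x : K, val x = ⊤ ↔ x = 0)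
    (hvalmul : ∀ x y : K, val (x * y) = val x + val y)
    (hvaladd : ∀ x y : K, min (val x) (val y) ≤ val (x + y))
    (f : Polynomial K) (hf : f ≠ 0) (γ : Γ) :
    (∃ i j : ℕ, i ≠ j ∧ i ∈ polyTropD val f γ ∧ j ∈ polyTropD val f γ) ↔
      ∃ a : K, a ≠ 0 ∧ f.eval a = 0 ∧ val a = WithTop.some γ := by
  constructor
  · -- hard direction, strong induction on natDegree
    have main : ∀ n : ℕ, ∀ f : Polynomial K, f.natDegree = n → f ≠ 0 → DTwo val f γ →
        ∃ a : K, a ≠ 0 ∧ f.eval a = 0 ∧ val a = WithTop.some γ := by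
      intro n
      induction n using Nat.strong_induction_on with
      | _ n ih =>
        intro f hdeg hf0 hD
        rcases Nat.eq_zero_or_pos n with hn | hn
        · -- constant: contradiction
          subst hn
          obtain ⟨c, hc⟩ := Polynomial.natDegree_eq_zero.1 hdeg
          obtain ⟨i, j, hij, ⟨hi, _⟩, ⟨hj, _⟩⟩ := hD
          rw [← hc] at hi hj
          have hi' := Polynomial.support_C_subset c hi
          have hj' := Polynomial.support_C_subset c hj
          simp only [Finset.mem_singleton] at hi' hj'
          exact absurd (hi'.trans hj'.symm) hij
        · -- degree ≥ 1: split off a root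
          have hdne : f.degree ≠ 0 := by
            rw [Polynomial.degree_eq_natDegree hf0, hdeg]
            exact_mod_cast Nat.pos_iff_ne_zero.1 hn
          obtain ⟨a, haroot⟩ := IsAlgClosed.exists_root f hdne
          obtain ⟨g, hfg⟩ := Polynomial.dvd_iff_isRoot.2 haroot
          have hXa : (X - C a : Polynomial K) ≠ 0 := Polynomial.X_sub_C_ne_zero a
          have hg0 : g ≠ 0 := by
            intro h
            rw [h, mul_zero] at hfg
            exact hf0 hfg
          have hdegg : g.natDegree = n - 1 := by
            have := Polynomial.natDegree_mul hXa hg0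
            rw [← hfg, hdeg, Polynomial.natDegree_X_sub_C] at this
            omega
          by_cases hD1 : DTwo val (X - C a) γ
          · obtain ⟨ha, hva⟩ := DTwo_linear val hval0 hvalmul hD1
            exact ⟨a, ha, haroot, hva⟩
          · by_cases hD2 : DTwo val g γ
            · obtain ⟨b, hb, hgb, hvb⟩ := ih (n - 1) (by omega) g hdegg hg0 hD2
              refine ⟨b, hb, ?_, hvb⟩
              rw [hfg, Polynomial.eval_mul, hgb, mul_zero]
            · rw [hfg] at hD
              exact absurd hD (DTwo_mul val hval0 hvalmul hvaladd hXa hg0 γ hD1 hD2)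
    exact main f.natDegree f rfl hf
  · rintro ⟨a, ha, hroot, hva⟩
    exact root_imp_DTwo val hval0 hvalmul hvaladd hf ha hroot hva
end

section
/- If K is an algebraically closed field with a Krull valuation val : K → Γ ∪ {∞}, then the residue field R_val = A_val / m_val of the valuation (where A_val = {a ∈ K : val(a) ≥ 0} is the valuation ring and m_val = {a ∈ K : val(a) > 0} is its maximal ideal) is algebraically closed. -/
open Polynomial

/-- If `K` is an algebraically closed field with a Krull valuation, then the residue
field `A_val / m_val` of the valuation ring is algebraically closed. -/
theorem residue_field_isAlgClosed {Γ : Type*} [AddCommGroup Γ] [LinearOrder Γ] [IsOrderedAddMonoid Γ]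
    {K : Type*} [Field K] [IsAlgClosed K]
    (val : K → WithTop Γ)
    (hval0 : ∀ x : K, val x = ⊤ ↔ x = 0)
    (hvalmul : ∀ x y : K, val (x * y) = val x + val y)
    (hvaladd : ∀ x y : K, min (val x) (val y) ≤ val (x + y))
    (A : Subring K) (hA : ∀ a : K, a ∈ A ↔ 0 ≤ val a)
    (m : Ideal A) (hm : ∀ a : A, a ∈ m ↔ 0 < val (a : K))
    (hmax : m.IsMaximal) :
    letI : Field (A ⧸ m) := Ideal.Quotient.field m
    IsAlgClosed (A ⧸ m) := by
  letI : Field (A ⧸ m) := Ideal.Quotient.field m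
  -- basic valuation facts
  have hval1 : val 1 = 0 := by
    have h := hvalmul 1 1
    rw [one_mul] at h
    have h1 : val 1 ≠ ⊤ := by simp [hval0]
    obtain ⟨v, hv⟩ := WithTop.ne_top_iff_exists.mp h1
    rw [← hv] at h ⊢
    rw [← WithTop.coe_add, WithTop.coe_eq_coe] at h
    have : v = 0 := by
      have := add_left_cancel (a := v) (b := (0:Γ)) (c := v)
        (by rw [add_zero]; exact h)
      exact this.symm
    simp [this]
  have hvalneg : ∀ y : K, val (-y) = val y := by
    intro y
    have hm1 : val (-1 : K) = 0 := by
      have h := hvalmul (-1) (-1)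
      rw [neg_mul_neg, one_mul, hval1] at h
      have h1 : val (-1 : K) ≠ ⊤ := by simp [hval0]
      obtain ⟨v, hv⟩ := WithTop.ne_top_iff_exists.mp h1
      rw [← hv] at h ⊢
      rw [← WithTop.coe_add, eq_comm, ← WithTop.coe_zero, WithTop.coe_eq_coe] at h
      have hv0 : v = 0 := by
        rcases lt_trichotomy v 0 with h' | h' | h'
        · have h2 := add_lt_add h' h'
          rw [h, add_zero] at h2
          exact absurd h2 (lt_irrefl 0)
        · exact h'
        · have h2 := add_lt_add h' h'
          rw [h, add_zero] at h2
          exact absurd h2 (lt_irrefl 0)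
      simp [hv0]
    rw [neg_eq_neg_one_mul, hvalmul, hm1, zero_add]
  -- sum lemma
  have hvalsum : ∀ (s : Finset ℕ) (f : ℕ → K) (t : WithTop Γ),
      (∀ i ∈ s, t ≤ val (f i)) → t ≤ val (∑ i ∈ s, f i) := by
    intro s f t h
    induction s using Finset.cons_induction with
    | empty => simp [(hval0 0).mpr rfl]
    | cons a s ha ih =>
      rw [Finset.sum_cons]
      refine le_trans ?_ (hvaladd _ _)
      exact le_min (h a (Finset.mem_cons_self a s))
        (ih fun i hi => h i (Finset.mem_cons_of_mem hi))
  apply IsAlgClosed.of_exists_root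
  intro p hpm hpi
  -- lift p to a monic polynomial q over A
  have hlift : p ∈ Polynomial.lifts (Ideal.Quotient.mk m) := by
    rw [Polynomial.lifts_iff_coeff_lifts]
    intro n
    exact Ideal.Quotient.mk_surjective (p.coeff n)
  obtain ⟨q, hq, hqdeg, hqm⟩ := Polynomial.lifts_and_degree_eq_and_monic hlift hpm
  set Q : K[X] := q.map A.subtype with hQ
  have hQm : Q.Monic := hqm.map A.subtype
  have hQdeg : Q.degree = p.degree := by
    rw [hQ, hqm.degree_map, hqdeg]
  have hQne : Q.degree ≠ 0 := by
    rw [hQdeg]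
    exact (Polynomial.degree_pos_of_irreducible hpi).ne'
  obtain ⟨x, hx⟩ := IsAlgClosed.exists_root Q hQne
  have hxroot : Q.eval x = 0 := hx
  -- degrees
  set n := Q.natDegree with hn
  have hn1 : 1 ≤ n := by
    have := Polynomial.natDegree_pos_iff_degree_pos.mpr
      (hQdeg ▸ Polynomial.degree_pos_of_irreducible hpi)
    omega
  -- coefficients of Q have nonneg valuation
  have hQcoeff : ∀ i, 0 ≤ val (Q.coeff i) := by
    intro i
    rw [hQ, Polynomial.coeff_map]
    exact (hA _).mp (q.coeff i).2
  -- the root has nonneg valuation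
  have hx0 : 0 ≤ val x := by
    by_contra hneg
    push_neg at hneg
    have hxt : val x ≠ ⊤ := (hneg.trans_le le_top).ne
    obtain ⟨v, hv⟩ := WithTop.ne_top_iff_exists.mp hxt
    have hvlt : v < 0 := by
      rw [← hv, ← WithTop.coe_zero, WithTop.coe_lt_coe] at hneg; exact hneg
    have hpow : ∀ k : ℕ, val (x ^ k) = ((k • v : Γ) : WithTop Γ) := by
      intro k
      induction k with
      | zero => simp [hval1]
      | succ k ih =>
        rw [pow_succ, hvalmul, ih, ← hv, ← WithTop.coe_add, succ_nsmul]
    have hev := hxroot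
    rw [Polynomial.eval_eq_sum_range, ← hn, Finset.sum_range_succ,
      hQm.coeff_natDegree, one_mul] at hev
    have hxn : x ^ n = -∑ i ∈ Finset.range n, Q.coeff i * x ^ i := by
      linear_combination hev
    have hle : ((((n - 1) • v : Γ)) : WithTop Γ) ≤ val (x ^ n) := by
      rw [hxn, hvalneg]
      refine hvalsum _ _ _ ?_
      intro i hi
      rw [Finset.mem_range] at hi
      rw [hvalmul, hpow i]
      have h1 : ((n - 1) • v : Γ) ≤ i • v := by
        have : i • (-v) ≤ (n - 1) • (-v) :=
          nsmul_le_nsmul_left (neg_nonneg.mpr hvlt.le) (by omega)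
        have h2 : -(i • v) ≤ -((n - 1) • v) := by
          simpa [smul_neg] using this
        exact neg_le_neg_iff.mp h2
      calc (((n - 1) • v : Γ) : WithTop Γ) ≤ ((i • v : Γ) : WithTop Γ) :=
            WithTop.coe_le_coe.mpr h1
        _ ≤ val (Q.coeff i) + ((i • v : Γ) : WithTop Γ) :=
            le_add_of_nonneg_left (hQcoeff i)
    rw [hpow n, WithTop.coe_le_coe] at hle
    have hsucc : n • v = (n - 1) • v + v := by
      rw [← succ_nsmul]
      congr 1
      omega
    rw [hsucc] at hle
    have : (0 : Γ) ≤ v := (le_add_iff_nonneg_right _).mp hle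
    exact absurd this (not_le.mpr hvlt)
  -- the root lies in A; its residue is a root of p
  have hxA : x ∈ A := (hA x).mpr hx0
  refine ⟨Ideal.Quotient.mk m (⟨x, hxA⟩ : A), ?_⟩
  have hqx : q.eval (⟨x, hxA⟩ : A) = 0 := by
    have h1 : A.subtype (q.eval (⟨x, hxA⟩ : A)) = 0 := by
      have : Q.eval (A.subtype (⟨x, hxA⟩ : A)) = 0 := hxroot
      rw [hQ, Polynomial.eval_map, Polynomial.eval₂_at_apply] at this
      exact this
    exact Subtype.ext h1
  rw [← hq, Polynomial.eval_map, Polynomial.eval₂_at_apply, hqx, map_zero]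
end
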